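/- arXiv:1805.10563 — 2 statements merged into one kernel-verified Lean document; each statement's English description precedes it below -/
import Mathlib

section
/- Let Λ be a finite-dimensional algebra over an algebraically closed field k, and let (T, F) be a torsion pair in mod Λ. Then (T, F) is splitting (every indecomposable module lies in T or in F) if and only if for every module N in F, the Auslander–Reiten translate τN also lies in F. -/
open CategoryTheory CategoryTheory.Limits

universe u

section Prelude
variable {A : Type u} [Ring A]

/-- finite direct sum of `d` copies of `T` -/
noncomputable def copies (A : Type u) [Ring A] (T : ModuleCat.{u} A) (d : ℕ) :
    ModuleCat.{u} A := ModuleCat.of A (Fin d → T)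

/-- `M` is generated by `T`. -/
def IsGenBy (T M : ModuleCat.{u} A) : Prop :=
  ∃ (d : ℕ) (f : copies A T d ⟶ M), Function.Surjective f

/-- `M` is cogenerated by `T`. -/
def IsCogenBy (T M : ModuleCat.{u} A) : Prop :=
  ∃ (d : ℕ) (f : M ⟶ copies A T d), Function.Injective f

/-- `M` lies in `add T`: it is a direct summand of a finite direct sum of copies of `T`. -/
def InAdd (T M : ModuleCat.{u} A) : Prop :=
  ∃ (d : ℕ) (i : M ⟶ copies A T d) (p : copies A T d ⟶ M), i ≫ p = 𝟙 M

/-- `N` is a direct summand of `D`. -/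
def IsSummand (N D : ModuleCat.{u} A) : Prop :=
  ∃ (i : N ⟶ D) (p : D ⟶ N), i ≫ p = 𝟙 N

/-- Indecomposable module: nonzero and no nontrivial idempotent endomorphism. -/
def Indec (M : ModuleCat.{u} A) : Prop :=
  ¬ IsZero M ∧ ∀ e : M ⟶ M, e ≫ e = e → e = 0 ∨ e = 𝟙 M

/-- `0 → L → E → M → 0` is a short exact sequence. -/
def IsSES {L E M : ModuleCat.{u} A} (f : L ⟶ E) (g : E ⟶ M) : Prop :=
  Function.Injective f ∧ Function.Surjective g ∧ Function.Exact f g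

/-- projective dimension at most `n`. -/
def ProjDimLE : ℕ → ModuleCat.{u} A → Prop
  | 0, M => Projective M
  | n+1, M => Projective M ∨ ∃ (K P : ModuleCat.{u} A) (f : K ⟶ P) (g : P ⟶ M),
      Projective P ∧ Module.Finite A K ∧ IsSES f g ∧ ProjDimLE n K

/-- injective dimension at most `n`. -/
def InjDimLE : ℕ → ModuleCat.{u} A → Prop
  | 0, M => Injective M
  | n+1, M => Injective M ∨ ∃ (I C : ModuleCat.{u} A) (f : M ⟶ I) (g : I ⟶ C),
      Injective I ∧ Module.Finite A C ∧ IsSES f g ∧ InjDimLE n C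

/-- global dimension at most `n` (tested on finitely generated modules). -/
def GlobalDimLE (A : Type u) [Ring A] (n : ℕ) : Prop :=
  ∀ M : ModuleCat.{u} A, Module.Finite A M → ProjDimLE n M

/-- global dimension equal to `2`. -/
def GlobalDimEq2 (A : Type u) [Ring A] : Prop :=
  GlobalDimLE A 2 ∧ ¬ GlobalDimLE A 1

/-- dominant dimension at least 2 : there is an exact sequence `0 → A → I₀ → I₁`
with `I₀, I₁` projective-injective. -/
def DomDimGE2 (A : Type u) [Ring A] : Prop :=
  ∃ (I₀ I₁ : ModuleCat.{u} A) (f : ModuleCat.of A A ⟶ I₀) (g : I₀ ⟶ I₁),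
    Injective I₀ ∧ Projective I₀ ∧ Injective I₁ ∧ Projective I₁ ∧
    Function.Injective f ∧ Function.Exact f g

/-- `Ext¹(X, Y) = 0`, expressed by the splitting of all short exact sequences
`0 → Y → E → X → 0`. -/
def Ext1Vanish (X Y : ModuleCat.{u} A) : Prop :=
  ∀ (E : ModuleCat.{u} A) (f : Y ⟶ E) (g : E ⟶ X),
    IsSES f g → ∃ s : X ⟶ E, s ≫ g = 𝟙 X

/-- `T` is a tilting module. -/
structure IsTilting (T : ModuleCat.{u} A) : Prop where
  fg : Module.Finite A T
  pd : ProjDimLE 1 T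
  rigid : Ext1Vanish T T
  cores : ∃ (T₀ T₁ : ModuleCat.{u} A) (f : ModuleCat.of A A ⟶ T₀) (g : T₀ ⟶ T₁),
    IsSES f g ∧ InAdd T T₀ ∧ InAdd T T₁

/-- `T` is a cotilting module. -/
structure IsCotilting (T : ModuleCat.{u} A) : Prop where
  fg : Module.Finite A T
  id : InjDimLE 1 T
  rigid : Ext1Vanish T T
  res : ∀ I : ModuleCat.{u} A, Module.Finite A I → Injective I →
    ∃ (T₁ T₀ : ModuleCat.{u} A) (f : T₁ ⟶ T₀) (g : T₀ ⟶ I),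
      IsSES f g ∧ InAdd T T₀ ∧ InAdd T T₁

/-- `0 → L → E → M → 0` is an almost split (Auslander–Reiten) sequence. -/
structure IsAlmostSplit {L E M : ModuleCat.{u} A} (f : L ⟶ E) (g : E ⟶ M) : Prop where
  ses : IsSES f g
  not_split : ¬ ∃ s : M ⟶ E, s ≫ g = 𝟙 M
  indec_left : Indec L
  indec_right : Indec M
  right_almost : ∀ (X : ModuleCat.{u} A) (h : X ⟶ M),
    (¬ ∃ s : M ⟶ X, s ≫ h = 𝟙 M) → ∃ t : X ⟶ E, t ≫ g = h
  left_almost : ∀ (X : ModuleCat.{u} A) (h : L ⟶ X),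
    (¬ ∃ r : X ⟶ L, h ≫ r = 𝟙 L) → ∃ t : E ⟶ X, f ≫ t = h

/-- The Auslander–Reiten translation `τ` (and its inverse `τ⁻¹`),
characterized by almost split sequences. -/
structure ARTranslation (A : Type u) [Ring A] where
  τ : ModuleCat.{u} A → ModuleCat.{u} A
  τinv : ModuleCat.{u} A → ModuleCat.{u} A
  fg_τ : ∀ M : ModuleCat.{u} A, Module.Finite A M → Module.Finite A (τ M)
  fg_τinv : ∀ M : ModuleCat.{u} A, Module.Finite A M → Module.Finite A (τinv M)
  τ_proj : ∀ M : ModuleCat.{u} A, Module.Finite A M → Projective M → IsZero (τ M)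
  τinv_inj : ∀ M : ModuleCat.{u} A, Module.Finite A M → Injective M → IsZero (τinv M)
  τ_spec : ∀ M : ModuleCat.{u} A, Module.Finite A M → Indec M → ¬ Projective M →
    ∃ (E : ModuleCat.{u} A) (f : τ M ⟶ E) (g : E ⟶ M), IsAlmostSplit f g
  τinv_spec : ∀ M : ModuleCat.{u} A, Module.Finite A M → Indec M → ¬ Injective M →
    ∃ (E : ModuleCat.{u} A) (f : M ⟶ E) (g : E ⟶ τinv M), IsAlmostSplit f g
  τ_iso : ∀ M N : ModuleCat.{u} A, Nonempty (M ≅ N) → Nonempty (τ M ≅ τ N)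
  τinv_iso : ∀ M N : ModuleCat.{u} A, Nonempty (M ≅ N) → Nonempty (τinv M ≅ τinv N)
  τ_add : ∀ M N : ModuleCat.{u} A, Nonempty (τ (M ⊞ N) ≅ τ M ⊞ τ N)
  τinv_add : ∀ M N : ModuleCat.{u} A, Nonempty (τinv (M ⊞ N) ≅ τinv M ⊞ τinv N)

/-- A torsion pair `(T, F)` in `mod A`. -/
structure TorsionPair (A : Type u) [Ring A] where
  tors : Set (ModuleCat.{u} A)
  free : Set (ModuleCat.{u} A)
  fg_tors : ∀ M ∈ tors, Module.Finite A M
  fg_free : ∀ N ∈ free, Module.Finite A N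
  hom_zero : ∀ M ∈ tors, ∀ N ∈ free, ∀ f : M ⟶ N, f = 0
  max_tors : ∀ M : ModuleCat.{u} A, Module.Finite A M →
    (∀ N ∈ free, ∀ f : M ⟶ N, f = 0) → M ∈ tors
  max_free : ∀ N : ModuleCat.{u} A, Module.Finite A N →
    (∀ M ∈ tors, ∀ f : M ⟶ N, f = 0) → N ∈ free

/-- A torsion pair is splitting if every f.g. indecomposable lies in one of the classes. -/
def TorsionPair.Splitting (P : TorsionPair A) : Prop :=
  ∀ M : ModuleCat.{u} A, Module.Finite A M → Indec M → M ∈ P.tors ∨ M ∈ P.free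

/-- Membership in `C_Λ = Gen(Q̃) ∩ Cogen(Q̃)`, `Q̃` the sum of the indecomposable
projective-injective modules: generated and cogenerated by a projective-injective module. -/
def InC (M : ModuleCat.{u} A) : Prop :=
  (∃ Q : ModuleCat.{u} A, Module.Finite A Q ∧ Projective Q ∧ Injective Q ∧ IsGenBy Q M) ∧
  (∃ Q : ModuleCat.{u} A, Module.Finite A Q ∧ Projective Q ∧ Injective Q ∧ IsCogenBy Q M)

/-- `K` is a syzygy of `M`: kernel of an epimorphism from a f.g. projective onto `M`. -/
def IsSyzygy (K M : ModuleCat.{u} A) : Prop :=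
  ∃ (P : ModuleCat.{u} A) (f : K ⟶ P) (g : P ⟶ M),
    Projective P ∧ Module.Finite A P ∧ IsSES f g

/-- `g : P ⟶ M` is a projective cover. -/
def IsProjCover {P M : ModuleCat.{u} A} (g : P ⟶ M) : Prop :=
  Projective P ∧ Module.Finite A P ∧ Function.Surjective g ∧
    ∀ (X : ModuleCat.{u} A) (h : X ⟶ P), Function.Surjective (h ≫ g) → Function.Surjective h

/-- `K` is the minimal syzygy `Ω M`: kernel of a projective cover of `M`. -/
def IsMinSyzygy (K M : ModuleCat.{u} A) : Prop :=
  ∃ (P : ModuleCat.{u} A) (f : K ⟶ P) (g : P ⟶ M), IsSES f g ∧ IsProjCover g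

/-- `C` is a cosyzygy of `M`: cokernel of a monomorphism from `M` into a f.g. injective. -/
def IsCosyzygy (C M : ModuleCat.{u} A) : Prop :=
  ∃ (I : ModuleCat.{u} A) (f : M ⟶ I) (g : I ⟶ C),
    Injective I ∧ Module.Finite A I ∧ IsSES f g

/-- `M` is basic: no indecomposable occurs twice in a decomposition. -/
def IsBasic (M : ModuleCat.{u} A) : Prop :=
  ∀ X : ModuleCat.{u} A, Indec X → ¬ IsSummand (X ⊞ X) M

/-- `D` is a basic f.g. injective cogenerator (i.e. `D ≅ DA`). -/
def IsMinimalInjectiveCogenerator (D : ModuleCat.{u} A) : Prop :=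
  Module.Finite A D ∧ Injective D ∧ IsBasic D ∧
    ∀ M : ModuleCat.{u} A, Module.Finite A M → IsCogenBy D M

end Prelude

section Infra
variable {k : Type u} [Field k] {A : Type u} [Ring A] [Algebra k A]

noncomputable def kdim (k : Type u) [Field k] {A : Type u} [Ring A] [Algebra k A]
    (M : ModuleCat.{u} A) : ℕ :=
  @Module.finrank k M _ _ (Module.compHom M (algebraMap k A))

variable [FiniteDimensional k A]

lemma kfin (M : ModuleCat.{u} A) (h : Module.Finite A M) :
    @Module.Finite k M _ _ (Module.compHom M (algebraMap k A)) := by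
  letI : Module k M := Module.compHom M (algebraMap k A)
  letI : IsScalarTower k A M := ⟨fun c a m => by
    show (c • a) • m = _
    rw [Algebra.smul_def, mul_smul]; rfl⟩
  exact Module.Finite.trans A M

lemma noeth (k : Type u) [Field k] {A : Type u} [Ring A] [Algebra k A] [FiniteDimensional k A]
    (M : ModuleCat.{u} A) (h : Module.Finite A M) : IsNoetherian A M := by
  letI : Module k M := Module.compHom M (algebraMap k A)
  letI : IsScalarTower k A M := ⟨fun c a m => by
    show (c • a) • m = _
    rw [Algebra.smul_def, mul_smul]; rfl⟩
  haveI : Module.Finite k M := Module.Finite.trans A M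
  haveI : IsNoetherian k M := IsNoetherian.iff_fg.mpr ‹_›
  exact isNoetherian_of_tower k ‹IsNoetherian k M›

lemma kdim_pos (M : ModuleCat.{u} A) (hM : Module.Finite A M) (h : ¬ Subsingleton M) :
    0 < kdim k M := by
  letI : Module k M := Module.compHom M (algebraMap k A)
  haveI : Module.Finite k M := kfin M hM
  haveI : Nontrivial M := not_subsingleton_iff_nontrivial.mp h
  exact Module.finrank_pos

lemma kdim_biprod {M M₁ M₂ : ModuleCat.{u} A} (hM1 : Module.Finite A M₁)
    (hM2 : Module.Finite A M₂) (eIso : M ≅ M₁ ⊞ M₂) :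
    kdim k M = kdim k M₁ + kdim k M₂ := by
  letI : Module k M := Module.compHom M (algebraMap k A)
  letI : Module k M₁ := Module.compHom M₁ (algebraMap k A)
  letI : Module k M₂ := Module.compHom M₂ (algebraMap k A)
  haveI : Module.Finite k M₁ := kfin M₁ hM1
  haveI : Module.Finite k M₂ := kfin M₂ hM2
  have F : (M : Type u) ≃ₗ[A] (M₁ × M₂ : Type u) :=
    (eIso ≪≫ ModuleCat.biprodIsoProd M₁ M₂).toLinearEquiv
  have E : (M : Type u) ≃ₗ[k] (M₁ × M₂ : Type u) :=
    { F.toAddEquiv with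
      map_smul' := fun c x => F.map_smul (algebraMap k A c) x }
  show Module.finrank k M = Module.finrank k M₁ + Module.finrank k M₂
  rw [E.finrank_eq]
  exact Module.finrank_prod

lemma kdim_lt {M M₁ M₂ : ModuleCat.{u} A} (hM1 : Module.Finite A M₁)
    (hM2 : Module.Finite A M₂) (eIso : M ≅ M₁ ⊞ M₂) (h2 : ¬ Subsingleton M₂) :
    kdim k M₁ < kdim k M := by
  rw [kdim_biprod hM1 hM2 eIso]
  have := kdim_pos (k := k) M₂ hM2 h2
  omega

lemma subsingleton_of_isZero {M : ModuleCat.{u} A} (h : IsZero M) : Subsingleton M := by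
  have h1 : (𝟙 M : M ⟶ M) = 0 := h.eq_of_src _ _
  refine ⟨fun a b => ?_⟩
  calc a = (𝟙 M : M ⟶ M) a := rfl
    _ = (0 : M ⟶ M) a := by rw [h1]
    _ = (0 : M ⟶ M) b := rfl
    _ = (𝟙 M : M ⟶ M) b := by rw [h1]
    _ = b := rfl

lemma finite_of_iso {M N : ModuleCat.{u} A} (e : M ≅ N) (h : Module.Finite A M) :
    Module.Finite A N := Module.Finite.equiv e.toLinearEquiv

/-- The induction principle over indecomposable decompositions. -/
lemma indec_induction (k : Type u) [Field k] {A : Type u} [Ring A] [Algebra k A]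
    [FiniteDimensional k A] (Q : ModuleCat.{u} A → Prop)
    (hiso : ∀ M N : ModuleCat.{u} A, Module.Finite A N → (M ≅ N) → Q N → Q M)
    (h0 : ∀ M : ModuleCat.{u} A, IsZero M → Q M)
    (h1 : ∀ M : ModuleCat.{u} A, Module.Finite A M → Indec M → Q M)
    (h2 : ∀ M N : ModuleCat.{u} A, Module.Finite A M → Module.Finite A N →
      Q M → Q N → Q (M ⊞ N)) :
    ∀ M : ModuleCat.{u} A, Module.Finite A M → Q M := by
  suffices H : ∀ (n : ℕ) (M : ModuleCat.{u} A), Module.Finite A M → kdim k M ≤ n → Q M from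
    fun M hM => H (kdim k M) M hM le_rfl
  intro n
  induction n using Nat.strong_induction_on with
  | _ n ih =>
  intro M hM hn
  by_cases hs : Subsingleton M
  · exact h0 M (ModuleCat.isZero_of_subsingleton M)
  by_cases hi : Indec M
  · exact h1 M hM hi
  have hnz : ¬ IsZero M := fun h => hs (subsingleton_of_isZero h)
  rw [Indec] at hi
  push_neg at hi
  obtain ⟨e, he, he0, he1⟩ := hi hnz
  have hee : ∀ x : M, e (e x) = e x := fun x => congrArg (fun f => (f : M ⟶ M) x) he
  have hP : LinearMap.IsProj (LinearMap.range e.hom) e.hom := by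
    refine ⟨fun x => LinearMap.mem_range_self e.hom x, ?_⟩
    rintro x ⟨y, rfl⟩
    exact hee y
  set M₁ : ModuleCat.{u} A := ModuleCat.of A (LinearMap.range e.hom)
  set M₂ : ModuleCat.{u} A := ModuleCat.of A (LinearMap.ker e.hom)
  have eqv : ((LinearMap.range e.hom) × (LinearMap.ker e.hom) : Type u) ≃ₗ[A] (M : Type u) :=
    Submodule.prodEquivOfIsCompl _ _ hP.isCompl
  have eIso : M ≅ M₁ ⊞ M₂ :=
    eqv.symm.toModuleIso ≪≫ (ModuleCat.biprodIsoProd M₁ M₂).symm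
  haveI hNoe : IsNoetherian A M := noeth k M hM
  have hM1 : Module.Finite A M₁ :=
    Module.Finite.iff_fg.mpr (IsNoetherian.noetherian _)
  have hM2 : Module.Finite A M₂ :=
    Module.Finite.iff_fg.mpr (IsNoetherian.noetherian _)
  have hn1 : ¬ Subsingleton M₁ := by
    intro h
    apply he0
    ext x
    have : (⟨e x, LinearMap.mem_range_self e.hom x⟩ : LinearMap.range e.hom) = ⟨0, Submodule.zero_mem _⟩ :=
      h.elim _ _
    simpa using congrArg Subtype.val this
  have hn2 : ¬ Subsingleton M₂ := by
    intro h
    apply he1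
    ext x
    have hk : x - e x ∈ LinearMap.ker e.hom := by
      simp [LinearMap.mem_ker, map_sub, hee]
    have : (⟨x - e x, hk⟩ : LinearMap.ker e.hom) = ⟨0, Submodule.zero_mem _⟩ := h.elim _ _
    have := congrArg Subtype.val this
    exact (sub_eq_zero.mp (by simpa using this)).symm
  have hd1 : kdim k M₁ < n := lt_of_lt_of_le (kdim_lt hM1 hM2 eIso hn2) hn
  have hd2 : kdim k M₂ < n :=
    lt_of_lt_of_le (kdim_lt hM2 hM1 (eIso ≪≫ biprod.braiding M₁ M₂) hn1) hn
  exact hiso M (M₁ ⊞ M₂) (Module.Finite.equiv eIso.toLinearEquiv) eIso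
    (h2 M₁ M₂ hM1 hM2 (ih _ hd1 M₁ hM1 le_rfl) (ih _ hd2 M₂ hM2 le_rfl))

end Infra
section Tors
variable {A : Type u} [Ring A]

noncomputable def iso_biprod_zero {M Z : ModuleCat.{u} A} (hZ : IsZero Z) : M ≅ M ⊞ Z := by
  refine ⟨biprod.lift (𝟙 M) 0, biprod.fst, by simp, ?_⟩
  apply biprod.hom_ext
  · simp
  · simp
    exact hZ.eq_of_tgt _ _

lemma subsingleton_biprod_of_subsingleton {M N : ModuleCat.{u} A} (hM : Subsingleton M)
    (hN : Subsingleton N) : Subsingleton ↑(M ⊞ N) :=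
  haveI := hM; haveI := hN
  ⟨fun a b => (ModuleCat.biprodIsoProd M N).toLinearEquiv.injective
    (Subsingleton.elim (α := ↑M × ↑N) _ _)⟩

noncomputable def biprod_shuffle (P Q R S : ModuleCat.{u} A) : (P ⊞ Q) ⊞ (R ⊞ S) ≅ (P ⊞ R) ⊞ (Q ⊞ S) := by
  refine ModuleCat.biprodIsoProd _ _ ≪≫ ?_ ≪≫ (ModuleCat.biprodIsoProd _ _).symm
  refine LinearEquiv.toModuleIso ?_
  refine LinearEquiv.trans
    ((ModuleCat.biprodIsoProd P Q).toLinearEquiv.prodCongr (ModuleCat.biprodIsoProd R S).toLinearEquiv)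
    (LinearEquiv.trans (LinearEquiv.prodProdProdComm A P Q R S)
      ((ModuleCat.biprodIsoProd P R).toLinearEquiv.symm.prodCongr
        (ModuleCat.biprodIsoProd Q S).toLinearEquiv.symm))

variable {P : TorsionPair A}

lemma mem_free_of_iso {M N : ModuleCat.{u} A} (hN : N ∈ P.free) (e : M ≅ N) : M ∈ P.free := by
  refine P.max_free M (finite_of_iso e.symm (P.fg_free N hN)) (fun X hX f => ?_)
  have h : f ≫ e.hom = 0 := P.hom_zero X hX N hN _
  calc f = (f ≫ e.hom) ≫ e.inv := by rw [Category.assoc, e.hom_inv_id, Category.comp_id]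
  _ = 0 := by rw [h]; simp

lemma mem_tors_of_iso {M N : ModuleCat.{u} A} (hN : N ∈ P.tors) (e : M ≅ N) : M ∈ P.tors := by
  refine P.max_tors M (finite_of_iso e.symm (P.fg_tors N hN)) (fun Y hY f => ?_)
  have h : e.inv ≫ f = 0 := P.hom_zero N hN Y hY _
  calc f = e.hom ≫ (e.inv ≫ f) := by rw [e.hom_inv_id_assoc]
  _ = 0 := by rw [h]; simp

lemma finite_of_subsingleton {M : ModuleCat.{u} A} (h : Subsingleton M) : Module.Finite A M :=
  ⟨⟨∅, by apply Subsingleton.elim⟩⟩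

lemma zero_mem_free {N : ModuleCat.{u} A} (h : IsZero N) : N ∈ P.free := by
  refine P.max_free N (finite_of_subsingleton (subsingleton_of_isZero h)) (fun X hX f => ?_)
  exact h.eq_of_tgt f 0

lemma zero_mem_tors {N : ModuleCat.{u} A} (h : IsZero N) : N ∈ P.tors := by
  refine P.max_tors N (finite_of_subsingleton (subsingleton_of_isZero h)) (fun Y hY f => ?_)
  exact h.eq_of_src f 0

lemma finite_biprod {M N : ModuleCat.{u} A} (hM : Module.Finite A M) (hN : Module.Finite A N) :
    Module.Finite A ((M ⊞ N : ModuleCat.{u} A)) :=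
  finite_of_iso (ModuleCat.biprodIsoProd M N).symm Module.Finite.prod

lemma biprod_mem_free {M N : ModuleCat.{u} A} (hM : M ∈ P.free) (hN : N ∈ P.free) :
    (M ⊞ N) ∈ P.free := by
  refine P.max_free _ (finite_biprod (P.fg_free M hM) (P.fg_free N hN)) (fun X hX f => ?_)
  apply biprod.hom_ext
  · rw [P.hom_zero X hX M hM (f ≫ biprod.fst)]; simp
  · rw [P.hom_zero X hX N hN (f ≫ biprod.snd)]; simp

lemma biprod_mem_tors {M N : ModuleCat.{u} A} (hM : M ∈ P.tors) (hN : N ∈ P.tors) :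
    (M ⊞ N) ∈ P.tors := by
  refine P.max_tors _ (finite_biprod (P.fg_tors M hM) (P.fg_tors N hN)) (fun Y hY f => ?_)
  apply biprod.hom_ext'
  · rw [P.hom_zero M hM Y hY (biprod.inl ≫ f)]; simp
  · rw [P.hom_zero N hN Y hY (biprod.inr ≫ f)]; simp

lemma summand_mem_free {M N : ModuleCat.{u} A} (hN : N ∈ P.free) (i : M ⟶ N) (p : N ⟶ M)
    (hip : i ≫ p = 𝟙 M) : M ∈ P.free := by
  have hsurj : Function.Surjective p := fun m =>
    ⟨i m, congrArg (fun f : M ⟶ M => f m) hip⟩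
  haveI := P.fg_free N hN
  refine P.max_free M (Module.Finite.of_surjective p.hom hsurj) (fun X hX f => ?_)
  have h : f ≫ i = 0 := P.hom_zero X hX N hN _
  calc f = (f ≫ i) ≫ p := by rw [Category.assoc, hip, Category.comp_id]
  _ = 0 := by rw [h]; simp

end Tors
section SplitLemma
variable {k : Type u} [Field k] {A : Type u} [Ring A] [Algebra k A] [FiniteDimensional k A]
variable {P : TorsionPair A}

lemma comp_app {M N U : ModuleCat.{u} A} (f : M ⟶ N) (g : N ⟶ U) (x : M) :
    (f ≫ g) x = g (f x) := rfl

lemma biprod_total_app {M N : ModuleCat.{u} A} (x : ↑(M ⊞ N)) :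
    (biprod.inl : M ⟶ M ⊞ N) ((biprod.fst : M ⊞ N ⟶ M) x)
      + (biprod.inr : N ⟶ M ⊞ N) ((biprod.snd : M ⊞ N ⟶ N) x) = x := by
  have h : (biprod.fst ≫ biprod.inl + biprod.snd ≫ biprod.inr :
      (M ⊞ N : ModuleCat.{u} A) ⟶ M ⊞ N) x = x :=
    congrArg (fun w : (M ⊞ N : ModuleCat.{u} A) ⟶ (M ⊞ N : ModuleCat.{u} A) => w x)
      (biprod.total (X := M) (Y := N))
  have h2 : (biprod.fst ≫ biprod.inl + biprod.snd ≫ biprod.inr :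
      (M ⊞ N : ModuleCat.{u} A) ⟶ M ⊞ N) x
      = (biprod.inl : M ⟶ M ⊞ N) ((biprod.fst : M ⊞ N ⟶ M) x)
      + (biprod.inr : N ⟶ M ⊞ N) ((biprod.snd : M ⊞ N ⟶ N) x) := rfl
  exact h2.symm.trans h

lemma decomp_tors_free (k : Type u) [Field k] {A : Type u} [Ring A] [Algebra k A]
    [FiniteDimensional k A] (P : TorsionPair A) (hsplit : P.Splitting) :
    ∀ E : ModuleCat.{u} A, Module.Finite A E →
      ∃ Et Ef : ModuleCat.{u} A, Et ∈ P.tors ∧ Ef ∈ P.free ∧ Nonempty (E ≅ Et ⊞ Ef) := by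
  refine indec_induction k _ ?_ ?_ ?_ ?_
  · rintro M N _ e ⟨Et, Ef, h1, h2, ⟨i⟩⟩
    exact ⟨Et, Ef, h1, h2, ⟨e ≪≫ i⟩⟩
  · intro M hM
    exact ⟨M, M, zero_mem_tors hM, zero_mem_free hM, ⟨iso_biprod_zero hM⟩⟩
  · intro M hM hind
    have hZ : IsZero (ModuleCat.of A PUnit.{u+1}) := ModuleCat.isZero_of_subsingleton _
    rcases hsplit M hM hind with h | h
    · exact ⟨M, ModuleCat.of A PUnit.{u+1}, h, zero_mem_free hZ, ⟨iso_biprod_zero hZ⟩⟩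
    · exact ⟨ModuleCat.of A PUnit.{u+1}, M, zero_mem_tors hZ, h,
        ⟨iso_biprod_zero hZ ≪≫ biprod.braiding M _⟩⟩
  · rintro M N _ _ ⟨Mt, Mf, h1, h2, ⟨i⟩⟩ ⟨Nt, Nf, h3, h4, ⟨j⟩⟩
    exact ⟨Mt ⊞ Nt, Mf ⊞ Nf, biprod_mem_tors h1 h3, biprod_mem_free h2 h4,
      ⟨(biprod.mapIso i j) ≪≫ biprod_shuffle Mt Mf Nt Nf⟩⟩

lemma split_of_splitting (k : Type u) [Field k] [Algebra k A] [FiniteDimensional k A]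
    (hsplit : P.Splitting) {T E F : ModuleCat.{u} A} (hT : T ∈ P.tors)
    (hF : F ∈ P.free) (f : T ⟶ E) (g : E ⟶ F) (hses : IsSES f g) :
    ∃ s : F ⟶ E, s ≫ g = 𝟙 F := by
  obtain ⟨hinj, hsurj, hex⟩ := hses
  have hker : LinearMap.ker g.hom = LinearMap.range f.hom :=
    LinearMap.exact_iff.mp hex
  have hEfin : Module.Finite A E := by
    rw [Module.finite_def]
    apply Submodule.fg_of_fg_map_of_fg_inf_ker g.hom
    · rw [Submodule.map_top, LinearMap.range_eq_top.mpr hsurj]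
      exact Module.finite_def.mp (P.fg_free F hF)
    · rw [top_inf_eq, hker, LinearMap.range_eq_map]
      exact Submodule.FG.map _ (Module.finite_def.mp (P.fg_tors T hT))
  obtain ⟨Et, Ef, hEt, hEf, ⟨φ⟩⟩ := decomp_tors_free k P hsplit E hEfin
  set i1 : Et ⟶ (Et ⊞ Ef : ModuleCat.{u} A) := biprod.inl with hi1
  set i2 : Ef ⟶ (Et ⊞ Ef : ModuleCat.{u} A) := biprod.inr with hi2
  set p1 : (Et ⊞ Ef : ModuleCat.{u} A) ⟶ Et := biprod.fst with hp1
  set p2 : (Et ⊞ Ef : ModuleCat.{u} A) ⟶ Ef := biprod.snd with hp2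
  set h : Ef ⟶ F := i2 ≫ (φ.inv ≫ g) with hh
  have hz1 : ∀ x : ↑Et, g (φ.inv (i1 x)) = 0 := by
    intro x
    have hz := P.hom_zero Et hEt F hF (i1 ≫ φ.inv ≫ g)
    calc g (φ.inv (i1 x)) = (i1 ≫ φ.inv ≫ g) x := rfl
    _ = 0 := by rw [hz]; rfl
  have hz2 : ∀ t : ↑T, p2 (φ.hom (f t)) = (0 : ↑Ef) := by
    intro t
    have hz := P.hom_zero T hT Ef hEf (f ≫ φ.hom ≫ p2)
    calc p2 (φ.hom (f t)) = (f ≫ φ.hom ≫ p2) t := rfl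
    _ = 0 := by rw [hz]; rfl
  have hbij : Function.Bijective h := by
    constructor
    · intro x y hxy
      have hx0 : ∀ z : ↑Ef, h z = 0 → z = 0 := by
        intro z hz
        have hz' : g (φ.inv (i2 z)) = 0 := hz
        obtain ⟨t, ht⟩ := (hex _).mp hz'
        have h1 : φ.hom (f t) = i2 z := by
          rw [ht]
          calc φ.hom (φ.inv (i2 z)) = (φ.inv ≫ φ.hom) (i2 z) := rfl
          _ = i2 z := by rw [φ.inv_hom_id]; rfl
        have h2 : p2 (φ.hom (f t)) = (0 : ↑Ef) := hz2 t
        rw [h1] at h2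
        have h3 : p2 (i2 z) = z := by
          calc p2 (i2 z) = (i2 ≫ p2) z := rfl
          _ = z := by rw [hi2, hp2, biprod.inr_snd]; rfl
        rw [h3] at h2
        exact h2
      have hd : h (x - y) = 0 := by rw [map_sub, hxy, sub_self]
      have := hx0 _ hd
      rwa [sub_eq_zero] at this
    · intro y
      obtain ⟨e, he⟩ := hsurj y
      refine ⟨p2 (φ.hom e), ?_⟩
      have htot : i1 (p1 (φ.hom e)) + i2 (p2 (φ.hom e)) = φ.hom e :=
        biprod_total_app (M := Et) (N := Ef) (φ.hom e)
      have hsum : g (φ.inv (i1 (p1 (φ.hom e)))) + g (φ.inv (i2 (p2 (φ.hom e))))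
          = g (φ.inv (φ.hom e)) := by
        rw [← map_add, ← map_add, htot]
      rw [hz1] at hsum
      rw [zero_add] at hsum
      have hei : φ.inv (φ.hom e) = e := by
        calc φ.inv (φ.hom e) = (φ.hom ≫ φ.inv) e := rfl
        _ = e := by rw [φ.hom_inv_id]; rfl
      rw [hei, he] at hsum
      exact hsum
  haveI : IsIso h := by
    rw [ConcreteCategory.isIso_iff_bijective]
    exact hbij
  refine ⟨inv h ≫ i2 ≫ φ.inv, ?_⟩
  rw [Category.assoc, Category.assoc, ← hh]
  exact IsIso.inv_hom_id h
lemma projective_of_isZero {M : ModuleCat.{u} A} (hM : IsZero M) : Projective M :=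
  ⟨fun _ _ => ⟨0, hM.eq_of_src _ _⟩⟩

lemma forward_dir (k : Type u) [Field k] [Algebra k A] [FiniteDimensional k A]
    (τ : ARTranslation A) (hsplit : P.Splitting) :
    ∀ N ∈ P.free, τ.τ N ∈ P.free := by
  have main : ∀ N : ModuleCat.{u} A, Module.Finite A N → (N ∈ P.free → τ.τ N ∈ P.free) := by
    refine indec_induction k _ ?_ ?_ ?_ ?_
    · intro M N hN e hQ hMfree
      have hNfree : N ∈ P.free := mem_free_of_iso hMfree e.symm
      obtain ⟨j⟩ := τ.τ_iso M N ⟨e⟩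
      exact mem_free_of_iso (hQ hNfree) j
    · intro M hM _
      have hfin : Module.Finite A M := finite_of_subsingleton (subsingleton_of_isZero hM)
      exact zero_mem_free (τ.τ_proj M hfin (projective_of_isZero hM))
    · intro M hM hind hfree
      by_cases hproj : Projective M
      · exact zero_mem_free (τ.τ_proj M hM hproj)
      obtain ⟨E, f, g, har⟩ := τ.τ_spec M hM hind hproj
      have hτfin : Module.Finite A (τ.τ M) := τ.fg_τ M hM
      rcases hsplit (τ.τ M) hτfin har.indec_left with ht | hf
      · exact absurd (split_of_splitting k hsplit ht hfree f g har.ses) har.not_split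
      · exact hf
    · intro M N hM hN hQM hQN hfree
      have h1 : M ∈ P.free := summand_mem_free hfree biprod.inl biprod.fst biprod.inl_fst
      have h2 : N ∈ P.free := summand_mem_free hfree biprod.inr biprod.snd biprod.inr_snd
      obtain ⟨j⟩ := τ.τ_add M N
      exact mem_free_of_iso (biprod_mem_free (hQM h1) (hQN h2)) j
  exact fun N hN => main N (P.fg_free N hN) hN
lemma split_of_tau_free (k : Type u) [Field k] [Algebra k A] [FiniteDimensional k A]
    (τ : ARTranslation A) (hτ : ∀ N ∈ P.free, τ.τ N ∈ P.free) :
    ∀ F : ModuleCat.{u} A, Module.Finite A F → F ∈ P.free → ∀ T ∈ P.tors,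
      ∀ (E : ModuleCat.{u} A) (f : T ⟶ E) (g : E ⟶ F), IsSES f g →
        ∃ s : F ⟶ E, s ≫ g = 𝟙 F := by
  refine indec_induction k (fun F => F ∈ P.free → ∀ T ∈ P.tors,
      ∀ (E : ModuleCat.{u} A) (f : T ⟶ E) (g : E ⟶ F), IsSES f g →
        ∃ s : F ⟶ E, s ≫ g = 𝟙 F) ?_ ?_ ?_ ?_
  -- iso case
  · intro M N hNfin e hQ hMfree T hT E f g hses
    obtain ⟨hinj, hsurj, hex⟩ := hses
    have hNfree : N ∈ P.free := mem_free_of_iso hMfree e.symm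
    have hexN : Function.Exact ⇑f ⇑(g ≫ e.hom) := by
      intro y
      constructor
      · intro hy
        apply (hex y).mp
        have : e.hom (g y) = 0 := hy
        have h0 : e.hom (g y) = e.hom 0 := by rw [this, map_zero]
        exact e.toLinearEquiv.injective h0
      · intro hy
        have : g y = 0 := (hex y).mpr hy
        show e.hom (g y) = 0
        rw [this, map_zero]
    have hsurjN : Function.Surjective ⇑(g ≫ e.hom) := by
      intro y
      obtain ⟨x, hx⟩ := hsurj (e.inv y)
      refine ⟨x, ?_⟩
      show e.hom (g x) = y
      rw [hx]
      exact congrArg (fun w : N ⟶ N => w y) e.inv_hom_id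
    obtain ⟨s', hs'⟩ := hQ hNfree T hT E f (g ≫ e.hom) ⟨hinj, hsurjN, hexN⟩
    refine ⟨e.hom ≫ s', ?_⟩
    have heq : ((e.hom ≫ s') ≫ g) ≫ e.hom = (𝟙 M) ≫ e.hom := by
      simp only [Category.assoc, Category.id_comp]
      rw [hs', Category.comp_id]
    exact (cancel_mono e.hom).mp heq
  -- zero case
  · intro M hM _ T hT E f g _
    exact ⟨0, hM.eq_of_src _ _⟩
  -- indecomposable case: the AR-sequence argument
  · intro F hFfin hFind hFfree T hT E f g hses
    obtain ⟨hinj, hsurj, hex⟩ := hses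
    by_cases hsp : ∃ s : F ⟶ E, s ≫ g = 𝟙 F
    · exact hsp
    exfalso
    have hproj : ¬ Projective F := by
      intro hp
      apply hsp
      haveI : Epi g := (ModuleCat.epi_iff_surjective g).mpr hsurj
      exact ⟨Projective.factorThru (𝟙 F) g, Projective.factorThru_comp _ _⟩
    obtain ⟨E₀, f₀, g₀, har⟩ := τ.τ_spec F hFfin hFind hproj
    obtain ⟨hinj₀, hsurj₀, hex₀⟩ := har.ses
    obtain ⟨t, ht⟩ := har.right_almost E g hsp
    -- construct u : T ⟶ τF with f₀ ∘ u = t ∘ f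
    have hmem : ∀ x : ↑T, ∃ w : ↑(τ.τ F), f₀ w = t (f x) := by
      intro x
      apply (hex₀ _).mp
      have h1 : g₀ (t (f x)) = (t ≫ g₀) (f x) := rfl
      rw [h1, ht]
      exact hex.apply_apply_eq_zero x
    let uf : ↑T → ↑(τ.τ F) := fun x => Classical.choose (hmem x)
    have huf : ∀ x, f₀ (uf x) = t (f x) := fun x => Classical.choose_spec (hmem x)
    have hadd : ∀ x y, uf (x + y) = uf x + uf y := by
      intro x y
      apply hinj₀
      rw [map_add, huf, huf, huf, map_add, map_add]
    have hsmul : ∀ (a : A) (x : ↑T), uf (a • x) = a • uf x := by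
      intro a x
      apply hinj₀
      rw [map_smul, huf, huf, map_smul, map_smul]
    let u : T ⟶ τ.τ F := ModuleCat.ofHom
      { toFun := uf, map_add' := hadd, map_smul' := hsmul }
    have hu0 : u = 0 := P.hom_zero T hT (τ.τ F) (hτ F hFfree) u
    have htf : ∀ x : ↑T, t (f x) = 0 := by
      intro x
      rw [← huf x]
      have : uf x = 0 := congrArg (fun w : T ⟶ τ.τ F => w x) hu0
      rw [this, map_zero]
    -- factor t through F via choice
    have hker_t : ∀ y : ↑E, g y = 0 → t y = 0 := by
      intro y hy
      obtain ⟨x, hx⟩ := (hex y).mp hy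
      rw [← hx]
      exact htf x
    let sf : ↑F → ↑E₀ := fun y => t (Classical.choose (hsurj y))
    have hgs : ∀ y, g (Classical.choose (hsurj y)) = y := fun y => Classical.choose_spec (hsurj y)
    have hwd : ∀ (y : ↑F) (z : ↑E), g z = y → t z = sf y := by
      intro y z hz
      have hd : t (z - Classical.choose (hsurj y)) = 0 := by
        apply hker_t
        rw [map_sub, hz, hgs, sub_self]
      rw [map_sub, sub_eq_zero] at hd
      exact hd
    have hadd' : ∀ y y', sf (y + y') = sf y + sf y' := by
      intro y y'
      have h1 : g (Classical.choose (hsurj y) + Classical.choose (hsurj y')) = y + y' := by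
        rw [map_add, hgs, hgs]
      rw [← hwd _ _ h1, map_add]
    have hsmul' : ∀ (a : A) (y : ↑F), sf (a • y) = a • sf y := by
      intro a y
      have h1 : g (a • Classical.choose (hsurj y)) = a • y := by
        rw [map_smul, hgs]
      rw [← hwd _ _ h1, map_smul]
    let σ : F ⟶ E₀ := ModuleCat.ofHom { toFun := sf, map_add' := hadd', map_smul' := hsmul' }
    apply har.not_split
    refine ⟨σ, ?_⟩
    apply ModuleCat.hom_ext
    apply LinearMap.ext
    intro y
    show g₀ (sf y) = y
    have h1 : g₀ (t (Classical.choose (hsurj y))) = (t ≫ g₀) (Classical.choose (hsurj y)) := rfl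
    show g₀ (t (Classical.choose (hsurj y))) = y
    rw [h1, ht]
    exact hgs y
  -- biproduct case: pull back to each summand
  · intro M N hMfin hNfin hQM hQN hfree T hT E f g hses
    obtain ⟨hinj, hsurj, hex⟩ := hses
    have h1 : M ∈ P.free := summand_mem_free hfree biprod.inl biprod.fst biprod.inl_fst
    have h2 : N ∈ P.free := summand_mem_free hfree biprod.inr biprod.snd biprod.inr_snd
    set i1 : M ⟶ (M ⊞ N : ModuleCat.{u} A) := biprod.inl with hi1
    set i2 : N ⟶ (M ⊞ N : ModuleCat.{u} A) := biprod.inr with hi2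
    set p1 : (M ⊞ N : ModuleCat.{u} A) ⟶ M := biprod.fst with hp1
    set p2 : (M ⊞ N : ModuleCat.{u} A) ⟶ N := biprod.snd with hp2
    have htot : ∀ x : ↑(M ⊞ N), i1 (p1 x) + i2 (p2 x) = x := fun x => biprod_total_app x
    -- pullback along i1
    set K1 : Submodule A ↑E := LinearMap.ker (g ≫ p2 : E ⟶ N).hom with hK1
    set E1 : ModuleCat.{u} A := ModuleCat.of A ↥K1 with hE1
    have hmem1 : ∀ x : ↑T, f x ∈ K1 := by
      intro x
      show p2 (g (f x)) = 0
      rw [hex.apply_apply_eq_zero x, map_zero]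
    let f1 : T ⟶ E1 := ModuleCat.ofHom (LinearMap.codRestrict K1 f.hom hmem1)
    let ι1 : E1 ⟶ E := ModuleCat.ofHom K1.subtype
    let g1 : E1 ⟶ M := ι1 ≫ g ≫ p1
    have hses1 : IsSES f1 g1 := by
      refine ⟨?_, ?_, ?_⟩
      · intro x y hxy
        apply hinj
        exact congrArg Subtype.val hxy
      · intro y
        obtain ⟨e, he⟩ := hsurj (i1 y)
        have hek : e ∈ K1 := by
          show p2 (g e) = 0
          rw [he]
          calc p2 (i1 y) = (i1 ≫ p2) y := rfl
          _ = 0 := by rw [hi1, hp2, biprod.inl_snd]; rfl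
        refine ⟨⟨e, hek⟩, ?_⟩
        show p1 (g e) = y
        rw [he]
        calc p1 (i1 y) = (i1 ≫ p1) y := rfl
        _ = y := by rw [hi1, hp1, biprod.inl_fst]; rfl
      · intro z
        constructor
        · intro hz
          have hz1 : p1 (g z.1) = 0 := hz
          have hz2 : p2 (g z.1) = 0 := z.2
          have hg0 : g z.1 = 0 := by
            rw [← htot (g z.1), hz1, hz2, map_zero, map_zero, add_zero]
          obtain ⟨x, hx⟩ := (hex _).mp hg0
          exact ⟨x, Subtype.ext hx⟩
        · rintro ⟨x, rfl⟩
          show p1 (g (f x)) = 0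
          rw [hex.apply_apply_eq_zero x, map_zero]
    -- pullback along i2
    set K2 : Submodule A ↑E := LinearMap.ker (g ≫ p1 : E ⟶ M).hom with hK2
    set E2 : ModuleCat.{u} A := ModuleCat.of A ↥K2 with hE2
    have hmem2 : ∀ x : ↑T, f x ∈ K2 := by
      intro x
      show p1 (g (f x)) = 0
      rw [hex.apply_apply_eq_zero x, map_zero]
    let f2 : T ⟶ E2 := ModuleCat.ofHom (LinearMap.codRestrict K2 f.hom hmem2)
    let ι2 : E2 ⟶ E := ModuleCat.ofHom K2.subtype
    let g2 : E2 ⟶ N := ι2 ≫ g ≫ p2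
    have hses2 : IsSES f2 g2 := by
      refine ⟨?_, ?_, ?_⟩
      · intro x y hxy
        apply hinj
        exact congrArg Subtype.val hxy
      · intro y
        obtain ⟨e, he⟩ := hsurj (i2 y)
        have hek : e ∈ K2 := by
          show p1 (g e) = 0
          rw [he]
          calc p1 (i2 y) = (i2 ≫ p1) y := rfl
          _ = 0 := by rw [hi2, hp1, biprod.inr_fst]; rfl
        refine ⟨⟨e, hek⟩, ?_⟩
        show p2 (g e) = y
        rw [he]
        calc p2 (i2 y) = (i2 ≫ p2) y := rfl
        _ = y := by rw [hi2, hp2, biprod.inr_snd]; rfl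
      · intro z
        constructor
        · intro hz
          have hz2 : p2 (g z.1) = 0 := hz
          have hz1 : p1 (g z.1) = 0 := z.2
          have hg0 : g z.1 = 0 := by
            rw [← htot (g z.1), hz1, hz2, map_zero, map_zero, add_zero]
          obtain ⟨x, hx⟩ := (hex _).mp hg0
          exact ⟨x, Subtype.ext hx⟩
        · rintro ⟨x, rfl⟩
          show p2 (g (f x)) = 0
          rw [hex.apply_apply_eq_zero x, map_zero]
    obtain ⟨s1, hs1⟩ := hQM h1 T hT E1 f1 g1 hses1
    obtain ⟨s2, hs2⟩ := hQN h2 T hT E2 f2 g2 hses2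
    refine ⟨biprod.desc (s1 ≫ ι1) (s2 ≫ ι2), ?_⟩
    have hι1snd : ι1 ≫ g ≫ p2 = 0 := by
      apply ModuleCat.hom_ext
      apply LinearMap.ext
      intro z
      exact z.2
    have hι2fst : ι2 ≫ g ≫ p1 = 0 := by
      apply ModuleCat.hom_ext
      apply LinearMap.ext
      intro z
      exact z.2
    apply biprod.hom_ext'
    · apply biprod.hom_ext
      · simp only [Category.comp_id, Category.assoc, biprod.inl_desc_assoc, biprod.inl_fst]
        exact hs1
      · simp only [Category.comp_id, Category.assoc, biprod.inl_desc_assoc, biprod.inl_snd]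
        rw [← hp2, hι1snd, comp_zero]
    · apply biprod.hom_ext
      · simp only [Category.comp_id, Category.assoc, biprod.inr_desc_assoc, biprod.inr_fst]
        rw [← hp1, hι2fst, comp_zero]
      · simp only [Category.comp_id, Category.assoc, biprod.inr_desc_assoc, biprod.inr_snd]
        exact hs2
lemma backward_dir (k : Type u) [Field k] [Algebra k A] [FiniteDimensional k A]
    (τ : ARTranslation A) (hτ : ∀ N ∈ P.free, τ.τ N ∈ P.free) : P.Splitting := by
  intro M hM hind
  classical
  haveI hNoeM : IsNoetherian A ↑M := noeth k M hM
  set tM : Submodule A ↑M :=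
    ⨆ q : Σ X : {X : ModuleCat.{u} A // X ∈ P.tors}, ((X.1 : ModuleCat.{u} A) ⟶ M),
      LinearMap.range q.2.hom with htM
  have hrange_le : ∀ (X : ModuleCat.{u} A) (hX : X ∈ P.tors) (h : X ⟶ M),
      LinearMap.range h.hom ≤ tM := by
    intro X hX h
    exact le_iSup (fun q : Σ X : {X : ModuleCat.{u} A // X ∈ P.tors},
      ((X.1 : ModuleCat.{u} A) ⟶ M) => LinearMap.range q.2.hom) ⟨⟨X, hX⟩, h⟩
  set Tobj : ModuleCat.{u} A := ModuleCat.of A ↥tM with hTobj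
  have hTfin : Module.Finite A Tobj := Module.Finite.iff_fg.mpr (IsNoetherian.noetherian tM)
  -- every map from the trace to a torsion-free module is zero, elementwise
  have hφz : ∀ (Y : ModuleCat.{u} A) (hY : Y ∈ P.free) (φ : Tobj ⟶ Y) (v : ↑M) (hv : v ∈ tM),
      φ ⟨v, hv⟩ = 0 := by
    intro Y hY φ v hv
    rw [htM] at hv
    refine Submodule.iSup_induction'
      (motive := fun v hv => φ ⟨v, htM ▸ hv⟩ = 0) _ ?_ ?_ ?_ hv
    · rintro ⟨⟨X, hX⟩, h⟩ x hx
      obtain ⟨w, rfl⟩ := hx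
      have hle := hrange_le X hX h
      let ρ : X ⟶ Tobj := ModuleCat.ofHom
        (LinearMap.codRestrict tM h.hom
          (fun z => hle (LinearMap.mem_range_self _ z)))
      have hρ : ρ ≫ φ = 0 := P.hom_zero X hX Y hY _
      have : φ ⟨h w, _⟩ = (ρ ≫ φ) w := rfl
      rw [this, hρ]
      rfl
    · exact map_zero φ.hom
    · intro x y hx hy ihx ihy
      have h3 : φ (⟨x, htM ▸ hx⟩ + ⟨y, htM ▸ hy⟩) = 0 := by
        rw [map_add]
        have ihx' : φ ⟨x, htM ▸ hx⟩ = 0 := ihx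
        have ihy' : φ ⟨y, htM ▸ hy⟩ = 0 := ihy
        rw [ihx', ihy', add_zero]
      exact h3
  have hTtors : Tobj ∈ P.tors := by
    refine P.max_tors Tobj hTfin (fun Y hY φ => ?_)
    apply ModuleCat.hom_ext
    apply LinearMap.ext
    rintro ⟨v, hv⟩
    exact hφz Y hY φ v hv
  -- the quotient is torsion free
  set Mq : ModuleCat.{u} A := ModuleCat.of A (↑M ⧸ tM) with hMq
  set π : M ⟶ Mq := ModuleCat.ofHom tM.mkQ with hπ
  have hMqfin : Module.Finite A Mq :=
    Module.Finite.of_surjective tM.mkQ (Submodule.mkQ_surjective tM)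
  have hMqfree : Mq ∈ P.free := by
    refine P.max_free Mq hMqfin (fun X hX h => ?_)
    set N' : Submodule A ↑M := Submodule.comap tM.mkQ (LinearMap.range h.hom)
      with hN'
    have htMle : tM ≤ N' := by
      intro v hv
      show tM.mkQ v ∈ LinearMap.range h.hom
      have : tM.mkQ v = 0 := by
        rw [Submodule.mkQ_apply, Submodule.Quotient.mk_eq_zero]
        exact hv
      rw [this]
      exact Submodule.zero_mem _
    set N'' : ModuleCat.{u} A := ModuleCat.of A ↥N' with hN''
    set inc : N'' ⟶ M := ModuleCat.ofHom N'.subtype with hinc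
    have hN''fin : Module.Finite A N'' := Module.Finite.iff_fg.mpr (IsNoetherian.noetherian N')
    have hN''tors : N'' ∈ P.tors := by
      refine P.max_tors N'' hN''fin (fun Y hY ψ => ?_)
      -- ψ vanishes on elements of tM
      have hψtM : ∀ (v : ↑M) (hv : v ∈ tM), ψ ⟨v, htMle hv⟩ = 0 := by
        intro v hv
        let ρ : Tobj ⟶ N'' := ModuleCat.ofHom (Submodule.inclusion htMle)
        have hρ : ρ ≫ ψ = 0 := P.hom_zero Tobj hTtors Y hY _
        have : ψ ⟨v, htMle hv⟩ = (ρ ≫ ψ) ⟨v, hv⟩ := rfl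
        rw [this, hρ]
        rfl
      -- construct θ : X ⟶ Y by lifting through the quotient
      have hlift : ∀ x : ↑X, ∃ m : ↑M, ∃ hm : m ∈ N', tM.mkQ m = h x := by
        intro x
        obtain ⟨m, hmk⟩ := Submodule.mkQ_surjective tM (h x)
        refine ⟨m, ?_, hmk⟩
        show tM.mkQ m ∈ LinearMap.range h.hom
        rw [hmk]
        exact LinearMap.mem_range_self _ x
      let θf : ↑X → ↑Y := fun x => ψ ⟨Classical.choose (hlift x),
        Classical.choose (Classical.choose_spec (hlift x))⟩
      have hθf : ∀ x, tM.mkQ (Classical.choose (hlift x)) = h x :=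
        fun x => Classical.choose_spec (Classical.choose_spec (hlift x))
      have hwd : ∀ (x : ↑X) (m : ↑M) (hm : m ∈ N') (hmk : tM.mkQ m = h x),
          ψ ⟨m, hm⟩ = θf x := by
        intro x m hm hmk
        set m0 := Classical.choose (hlift x) with hm0
        have hm0mem : m0 ∈ N' := Classical.choose (Classical.choose_spec (hlift x))
        have hd : m - m0 ∈ tM := by
          rw [← Submodule.Quotient.mk_eq_zero, ← Submodule.mkQ_apply, map_sub, hmk, hθf,
            sub_self]
        have hdiff : ψ ⟨m, hm⟩ - ψ ⟨m0, hm0mem⟩ = ψ ⟨m - m0, htMle hd⟩ := by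
          rw [← map_sub]
          rfl
        have h0 : ψ ⟨m - m0, htMle hd⟩ = 0 := hψtM _ hd
        have := hdiff.trans h0
        rw [sub_eq_zero] at this
        exact this
      have hθadd : ∀ x y, θf (x + y) = θf x + θf y := by
        intro x y
        have hxm : Classical.choose (hlift x) ∈ N' := Classical.choose (Classical.choose_spec (hlift x))
        have hym : Classical.choose (hlift y) ∈ N' := Classical.choose (Classical.choose_spec (hlift y))
        have hmem : Classical.choose (hlift x) + Classical.choose (hlift y) ∈ N' :=
          N'.add_mem hxm hym
        have hmk : tM.mkQ (Classical.choose (hlift x) + Classical.choose (hlift y))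
            = h (x + y) := by
          calc tM.mkQ (Classical.choose (hlift x) + Classical.choose (hlift y))
              = tM.mkQ (Classical.choose (hlift x)) + tM.mkQ (Classical.choose (hlift y)) :=
            map_add _ _ _
          _ = h x + h y := by rw [hθf, hθf]
          _ = h (x + y) := (map_add h.hom x y).symm
        have h5 := hwd (x + y) _ hmem hmk
        have h6 : ψ (((⟨Classical.choose (hlift x), hxm⟩ : ↥N')
            + (⟨Classical.choose (hlift y), hym⟩ : ↥N') : ↥N')) = θf x + θf y := by
          rw [map_add]
        exact (h5.symm.trans h6 :)
      have hθsmul : ∀ (a : A) (x : ↑X), θf (a • x) = a • θf x := by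
        intro a x
        have hxm : Classical.choose (hlift x) ∈ N' := Classical.choose (Classical.choose_spec (hlift x))
        have hmem : a • Classical.choose (hlift x) ∈ N' := N'.smul_mem a hxm
        have hmk : tM.mkQ (a • Classical.choose (hlift x)) = h (a • x) := by
          calc tM.mkQ (a • Classical.choose (hlift x))
              = a • tM.mkQ (Classical.choose (hlift x)) := map_smul _ _ _
          _ = a • h x := by rw [hθf]
          _ = h (a • x) := (map_smul h.hom a x).symm
        have h5 := hwd (a • x) _ hmem hmk
        have h6 : ψ ((a • (⟨Classical.choose (hlift x), hxm⟩ : ↥N') : ↥N')) = a • θf x := by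
          rw [map_smul]
        exact (h5.symm.trans h6 :)
      let θ : X ⟶ Y := ModuleCat.ofHom { toFun := θf, map_add' := hθadd, map_smul' := hθsmul }
      have hθ0 : θ = 0 := P.hom_zero X hX Y hY θ
      apply ModuleCat.hom_ext
      apply LinearMap.ext
      rintro ⟨m, hm⟩
      obtain ⟨x, hx⟩ := Submodule.mem_comap.mp hm
      have h1 := hwd x m hm hx.symm
      rw [h1]
      have h2 : θf x = θ x := rfl
      rw [h2, hθ0]
      rfl
    have hN'le : N' ≤ tM := by
      have hr := hrange_le N'' hN''tors inc
      intro v hv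
      exact hr ⟨⟨v, hv⟩, rfl⟩
    apply ModuleCat.hom_ext
    apply LinearMap.ext
    intro x
    obtain ⟨m, hm⟩ := Submodule.mkQ_surjective tM (h x)
    have hmN : m ∈ N' := by
      show tM.mkQ m ∈ LinearMap.range h.hom
      rw [hm]
      exact LinearMap.mem_range_self _ x
    have hm0 : tM.mkQ m = 0 := by
      rw [Submodule.mkQ_apply, Submodule.Quotient.mk_eq_zero]
      exact hN'le hmN
    rw [← hm, hm0]
    rfl
  -- the canonical sequence splits
  set ι : Tobj ⟶ M := ModuleCat.ofHom tM.subtype with hι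
  have hses : IsSES ι π := by
    refine ⟨Submodule.injective_subtype tM, Submodule.mkQ_surjective tM, ?_⟩
    rw [LinearMap.exact_iff]
    show LinearMap.ker tM.mkQ = LinearMap.range tM.subtype
    rw [Submodule.ker_mkQ, Submodule.range_subtype]
  obtain ⟨s, hs⟩ := split_of_tau_free k τ hτ Mq hMqfin hMqfree Tobj hTtors M ι π hses
  have hidem : (π ≫ s) ≫ (π ≫ s) = π ≫ s := by
    rw [Category.assoc, ← Category.assoc s, hs, Category.id_comp]
  rcases hind.2 (π ≫ s) hidem with h0 | h1
  · -- torsion case : tM = ⊤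
    left
    have hsπ : ∀ x : ↑Mq, π (s x) = x := fun x => congrArg (fun w : Mq ⟶ Mq => w x) hs
    have hπ0 : ∀ m : ↑M, π m = (0 : ↑Mq) := by
      intro m
      have h2 : s (π m) = 0 := by
        have h3 : (π ≫ s) m = (0 : M ⟶ M) m := congrArg (fun w : M ⟶ M => w m) h0
        exact h3
      have h4 := hsπ (π m)
      rw [h2, map_zero] at h4
      exact h4.symm
    have htop : tM = ⊤ := by
      rw [eq_top_iff]
      intro m _
      rw [← Submodule.Quotient.mk_eq_zero, ← Submodule.mkQ_apply]
      exact hπ0 m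
    have eqv : (↑M : Type u) ≃ₗ[A] ↥tM :=
      Submodule.topEquiv.symm.trans (LinearEquiv.ofEq ⊤ tM htop.symm)
    exact mem_tors_of_iso hTtors eqv.toModuleIso
  · -- torsion-free case : π is injective
    right
    have hinjπ : Function.Injective ⇑π := by
      intro a b hab
      have ha : (π ≫ s) a = a := congrArg (fun w : M ⟶ M => w a) h1
      have hb : (π ≫ s) b = b := congrArg (fun w : M ⟶ M => w b) h1
      calc a = s (π a) := ha.symm
      _ = s (π b) := by rw [hab]
      _ = b := hb
    have eqv : (↑M : Type u) ≃ₗ[A] ↑Mq :=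
      LinearEquiv.ofBijective π.hom ⟨hinjπ, Submodule.mkQ_surjective tM⟩
    exact mem_free_of_iso hMqfree eqv.toModuleIso

end SplitLemma



/-- a tilted algebra: the endomorphism algebra of a tilting module over a
finite-dimensional hereditary algebra. -/
structure TiltedWitness (k : Type u) [Field k] (A : Type u) [Ring A] [Algebra k A] where
  H : Type u
  [ringH : Ring H]
  [algH : Algebra k H]
  findim : FiniteDimensional k H
  hered : ∀ M : ModuleCat.{u} H, Module.Finite H M → ProjDimLE 1 M
  T : Type u
  [acg : AddCommGroup T]
  [modH : Module H T]
  [modk : Module k T]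
  [tower : IsScalarTower k H T]
  [scc : SMulCommClass H k T]
  tilt : IsTilting (ModuleCat.of H T)
  iso : Nonempty (A ≃ₐ[k] (T →ₗ[H] T))

def IsTiltedAlg (k : Type u) [Field k] (A : Type u) [Ring A] [Algebra k A] : Prop :=
  Nonempty (TiltedWitness k A)

/-- A torsion pair in mod Λ is splitting iff the torsion-free class is closed under τ. -/
theorem stmt0 (k : Type u) [Field k] [IsAlgClosed k]
    (A : Type u) [Ring A] [Algebra k A] [FiniteDimensional k A]
    (τ : ARTranslation A) (P : TorsionPair A) :
    P.Splitting ↔ ∀ N ∈ P.free, τ.τ N ∈ P.free :=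
  ⟨fun hs => forward_dir k τ hs, fun hτ => backward_dir k τ hτ⟩
end

section
/- Let A be an Auslander algebra of global dimension 2, and let T_C be the tilting-cotilting module in C_A, with T_C ≅ Q̃ ⊕ (⊕_i Ω I_i) (syzygies of indecomposable injective non-projective modules I_i). If pd_A(τ_A(⊕_i Ω I_i)) ≤ 1, then every indecomposable module X in the torsion class Gen(T_C) satisfies id_A X ≤ 1. -/
open CategoryTheory CategoryTheory.Limits

universe u

section MyAux

variable {A : Type u} [Ring A]

lemma myProj_of_cat {P : ModuleCat.{u} A} (hP : CategoryTheory.Projective P) :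
    Module.Projective A P :=
  (IsProjective.iff_projective P).mpr hP

lemma myInj_of_cat {Q : ModuleCat.{u} A} (hQ : CategoryTheory.Injective Q) :
    Module.Injective A Q :=
  Module.injective_module_of_injective_object A Q (inj := hQ)

lemma myInj_pi {Q : Type u} [AddCommGroup Q] [Module A Q] (hQ : Module.Injective A Q) (d : ℕ) :
    Module.Injective A (Fin d → Q) where
  out X Y _ _ _ _ f hf g := by
    choose h hh using fun i : Fin d => hQ.out f hf ((LinearMap.proj i) ∘ₗ g)
    exact ⟨LinearMap.pi h, fun x => funext fun i => hh i x⟩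

lemma split_nonempty {W E P : Type u} [AddCommGroup W] [AddCommGroup E] [AddCommGroup P]
    [Module A W] [Module A E] [Module A P] (ι : W →ₗ[A] E) (π : E →ₗ[A] P)
    (hι : Function.Injective ι) (hex : Function.Exact ι π)
    (t : P →ₗ[A] E) (ht : ∀ p, π (t p) = p) : Nonempty (E ≃ₗ[A] W × P) := by
  have hr : ∀ e : E, e - t (π e) ∈ LinearMap.range ι := by
    intro e
    have h0 : π (e - t (π e)) = 0 := by simp [map_sub, ht]
    simpa using (hex _).mp h0
  let w : E →ₗ[A] W := (LinearEquiv.ofInjective ι hι).symm.toLinearMap ∘ₗ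
      LinearMap.codRestrict (LinearMap.range ι) (LinearMap.id - t ∘ₗ π) (fun e => hr e)
  have hw : ∀ e : E, ι (w e) = e - t (π e) := by
    intro e
    have : ((LinearEquiv.ofInjective ι hι) ((LinearEquiv.ofInjective ι hι).symm
        ⟨e - t (π e), hr e⟩) : E) = (⟨e - t (π e), hr e⟩ : LinearMap.range ι) := by
      rw [LinearEquiv.apply_symm_apply]
    simpa [w, LinearEquiv.ofInjective_apply] using this
  have hπι : ∀ x : W, π (ι x) = 0 := fun x => (hex _).mpr ⟨x, rfl⟩
  refine ⟨LinearEquiv.ofLinear (w.prod π) (ι.coprod t) ?_ ?_⟩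
  · apply LinearMap.ext
    rintro ⟨a, b⟩
    have h1 : π (ι a + t b) = b := by simp [map_add, hπι, ht]
    have h2 : ι (w (ι a + t b)) = ι a := by rw [hw, h1]; abel
    exact Prod.ext (hι h2) h1
  · apply LinearMap.ext
    intro e
    have := hw e
    show ι (w e) + t (π e) = e
    rw [this]; abel

lemma proj_of_ses {W E P : Type u} [AddCommGroup W] [AddCommGroup E] [AddCommGroup P]
    [Module A W] [Module A E] [Module A P] (ι : W →ₗ[A] E) (π : E →ₗ[A] P)
    (hι : Function.Injective ι) (hπ : Function.Surjective π) (hex : Function.Exact ι π)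
    (hE : Module.Projective A E) (hP : Module.Projective A P) : Module.Projective A W := by
  obtain ⟨t, ht⟩ := Module.projective_lifting_property (h := hP) π LinearMap.id hπ
  obtain ⟨e⟩ := split_nonempty ι π hι hex t (fun p => DFunLike.congr_fun ht p)
  haveI := hE
  exact Module.Projective.of_split (e.symm.toLinearMap ∘ₗ LinearMap.inl A W P)
    (LinearMap.fst A W P ∘ₗ e.toLinearMap) (by ext x; simp)

end MyAux
section MyAux2
variable {A : Type u} [Ring A]

lemma split_nonempty' {W E P : Type u} [AddCommGroup W] [AddCommGroup E] [AddCommGroup P]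
    [Module A W] [Module A E] [Module A P] (ι : W →ₗ[A] E) (π : E →ₗ[A] P)
    (hι : Function.Injective ι) (hex : Function.Exact ι π)
    (t : P →ₗ[A] E) (ht : ∀ p, π (t p) = p) : Nonempty (E ≃ₗ[A] W × P) := by
  have hr : ∀ e : E, e - t (π e) ∈ LinearMap.range ι := by
    intro e
    have h0 : π (e - t (π e)) = 0 := by simp [map_sub, ht]
    simpa using (hex _).mp h0
  let w : E →ₗ[A] W := (LinearEquiv.ofInjective ι hι).symm.toLinearMap ∘ₗ
      LinearMap.codRestrict (LinearMap.range ι) (LinearMap.id - t ∘ₗ π) (fun e => hr e)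
  have hw : ∀ e : E, ι (w e) = e - t (π e) := by
    intro e
    have : ((LinearEquiv.ofInjective ι hι) ((LinearEquiv.ofInjective ι hι).symm
        ⟨e - t (π e), hr e⟩) : E) = (⟨e - t (π e), hr e⟩ : LinearMap.range ι) := by
      rw [LinearEquiv.apply_symm_apply]
    simpa [w, LinearEquiv.ofInjective_apply] using this
  have hπι : ∀ x : W, π (ι x) = 0 := fun x => (hex _).mpr ⟨x, rfl⟩
  refine ⟨LinearEquiv.ofLinear (w.prod π) (ι.coprod t) ?_ ?_⟩
  · apply LinearMap.ext
    rintro ⟨a, b⟩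
    have h1 : π (ι a + t b) = b := by simp [map_add, hπι, ht]
    have h2 : ι (w (ι a + t b)) = ι a := by rw [hw, h1]; abel
    exact Prod.ext (hι h2) h1
  · apply LinearMap.ext
    intro e
    have := hw e
    show ι (w e) + t (π e) = e
    rw [this]; abel

lemma schanuel_half {M X₁ P₁ P₂ : Type u} [AddCommGroup M] [AddCommGroup X₁]
    [AddCommGroup P₁] [AddCommGroup P₂] [Module A M] [Module A X₁]
    [Module A P₁] [Module A P₂]
    (f₁ : X₁ →ₗ[A] P₁) (g₁ : P₁ →ₗ[A] M) (hf₁ : Function.Injective f₁)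
    (hg₁ : Function.Surjective g₁) (hex₁ : Function.Exact f₁ g₁)
    (g₂ : P₂ →ₗ[A] M) (hg₂ : Function.Surjective g₂)
    (hP₂ : Module.Projective A P₂) :
    Nonempty (↥(LinearMap.ker ((g₁ ∘ₗ LinearMap.fst A P₁ P₂) - (g₂ ∘ₗ LinearMap.snd A P₁ P₂)))
      ≃ₗ[A] X₁ × P₂) := by
  set φ := (g₁ ∘ₗ LinearMap.fst A P₁ P₂) - (g₂ ∘ₗ LinearMap.snd A P₁ P₂) with hφ
  have hmem : ∀ v : P₁ × P₂, v ∈ LinearMap.ker φ ↔ g₁ v.1 = g₂ v.2 := by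
    intro v
    simp [hφ, LinearMap.mem_ker, sub_eq_zero]
  let ι : X₁ →ₗ[A] ↥(LinearMap.ker φ) :=
    LinearMap.codRestrict (LinearMap.ker φ) ((LinearMap.inl A P₁ P₂) ∘ₗ f₁)
      (fun x => (hmem _).mpr (by simpa using (hex₁ (f₁ x)).mpr ⟨x, rfl⟩))
  let π₂ : ↥(LinearMap.ker φ) →ₗ[A] P₂ := (LinearMap.snd A P₁ P₂) ∘ₗ (LinearMap.ker φ).subtype
  have hι : Function.Injective ι := by
    intro x y hxy
    have : f₁ x = f₁ y := congrArg (fun z => (Subtype.val z).1) hxy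
    exact hf₁ this
  have hexειπ : Function.Exact ι π₂ := by
    intro e
    constructor
    · intro h0
      obtain ⟨⟨p₁, p₂⟩, hp⟩ := e
      have hp₂ : p₂ = 0 := h0
      have : g₁ p₁ = 0 := by
        have := (hmem _).mp hp
        simp only [hp₂, map_zero] at this
        simpa using this
      obtain ⟨x, hx⟩ := (hex₁ p₁).mp this
      exact ⟨x, by apply Subtype.ext; simp [ι, hx, hp₂]⟩
    · rintro ⟨x, rfl⟩
      show ((LinearMap.inl A P₁ P₂) (f₁ x)).2 = 0
      rfl
  have hπ₂ : Function.Surjective π₂ := by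
    intro p₂
    obtain ⟨p₁, hp₁⟩ := hg₁ (g₂ p₂)
    exact ⟨⟨(p₁, p₂), (hmem _).mpr hp₁⟩, rfl⟩
  obtain ⟨t, ht⟩ := Module.projective_lifting_property (h := hP₂) π₂ LinearMap.id hπ₂
  exact split_nonempty' ι π₂ hι hexειπ t (fun p => DFunLike.congr_fun ht p)

lemma ker_swap_equiv {M P₁ P₂ : Type u} [AddCommGroup M] [AddCommGroup P₁] [AddCommGroup P₂]
    [Module A M] [Module A P₁] [Module A P₂] (g₁ : P₁ →ₗ[A] M) (g₂ : P₂ →ₗ[A] M) :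
    Nonempty (↥(LinearMap.ker ((g₁ ∘ₗ LinearMap.fst A P₁ P₂) - (g₂ ∘ₗ LinearMap.snd A P₁ P₂)))
      ≃ₗ[A] ↥(LinearMap.ker ((g₂ ∘ₗ LinearMap.fst A P₂ P₁) - (g₁ ∘ₗ LinearMap.snd A P₂ P₁)))) := by
  have hmem₁ : ∀ v : P₁ × P₂,
      v ∈ LinearMap.ker ((g₁ ∘ₗ LinearMap.fst A P₁ P₂) - (g₂ ∘ₗ LinearMap.snd A P₁ P₂)) ↔
        g₁ v.1 = g₂ v.2 := by intro v; simp [LinearMap.mem_ker, sub_eq_zero]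
  have hmem₂ : ∀ v : P₂ × P₁,
      v ∈ LinearMap.ker ((g₂ ∘ₗ LinearMap.fst A P₂ P₁) - (g₁ ∘ₗ LinearMap.snd A P₂ P₁)) ↔
        g₂ v.1 = g₁ v.2 := by intro v; simp [LinearMap.mem_ker, sub_eq_zero]
  refine ⟨{ toFun := fun c => ⟨((c : P₁ × P₂).2, (c : P₁ × P₂).1),
              (hmem₂ _).mpr (((hmem₁ _).mp c.2).symm)⟩
            invFun := fun c => ⟨((c : P₂ × P₁).2, (c : P₂ × P₁).1),
              (hmem₁ _).mpr (((hmem₂ _).mp c.2).symm)⟩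
            map_add' := fun x y => by apply Subtype.ext; rfl
            map_smul' := fun a x => by apply Subtype.ext; rfl
            left_inv := fun c => by apply Subtype.ext; rfl
            right_inv := fun c => by apply Subtype.ext; rfl }⟩

lemma schanuel_equiv {M X₁ P₁ X₂ P₂ : Type u} [AddCommGroup M] [AddCommGroup X₁]
    [AddCommGroup P₁] [AddCommGroup X₂] [AddCommGroup P₂] [Module A M] [Module A X₁]
    [Module A P₁] [Module A X₂] [Module A P₂]
    (f₁ : X₁ →ₗ[A] P₁) (g₁ : P₁ →ₗ[A] M) (hf₁ : Function.Injective f₁)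
    (hg₁ : Function.Surjective g₁) (hex₁ : Function.Exact f₁ g₁)
    (f₂ : X₂ →ₗ[A] P₂) (g₂ : P₂ →ₗ[A] M) (hf₂ : Function.Injective f₂)
    (hg₂ : Function.Surjective g₂) (hex₂ : Function.Exact f₂ g₂)
    (hP₁ : Module.Projective A P₁) (hP₂ : Module.Projective A P₂) :
    Nonempty ((X₁ × P₂) ≃ₗ[A] (X₂ × P₁)) := by
  obtain ⟨e₁⟩ := schanuel_half f₁ g₁ hf₁ hg₁ hex₁ g₂ hg₂ hP₂
  obtain ⟨e₂⟩ := schanuel_half f₂ g₂ hf₂ hg₂ hex₂ g₁ hg₁ hP₁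
  obtain ⟨sw⟩ := ker_swap_equiv g₁ g₂
  exact ⟨e₁.symm.trans (sw.trans e₂)⟩

lemma schanuel_transfer {M X₁ P₁ X₂ P₂ : Type u} [AddCommGroup M] [AddCommGroup X₁]
    [AddCommGroup P₁] [AddCommGroup X₂] [AddCommGroup P₂] [Module A M] [Module A X₁]
    [Module A P₁] [Module A X₂] [Module A P₂]
    (f₁ : X₁ →ₗ[A] P₁) (g₁ : P₁ →ₗ[A] M) (hf₁ : Function.Injective f₁)
    (hg₁ : Function.Surjective g₁) (hex₁ : Function.Exact f₁ g₁)
    (f₂ : X₂ →ₗ[A] P₂) (g₂ : P₂ →ₗ[A] M) (hf₂ : Function.Injective f₂)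
    (hg₂ : Function.Surjective g₂) (hex₂ : Function.Exact f₂ g₂)
    (hP₁ : Module.Projective A P₁) (hP₂ : Module.Projective A P₂)
    (hX₂ : Module.Projective A X₂) : Module.Projective A X₁ := by
  obtain ⟨σ⟩ := schanuel_equiv f₁ g₁ hf₁ hg₁ hex₁ f₂ g₂ hf₂ hg₂ hex₂ hP₁ hP₂
  haveI := hX₂; haveI := hP₁
  exact Module.Projective.of_split (σ.toLinearMap ∘ₗ LinearMap.inl A X₁ P₂)
    (LinearMap.fst A X₁ P₂ ∘ₗ σ.symm.toLinearMap) (by ext x; simp)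

lemma exists_factor {M N Z : Type u} [AddCommGroup M] [AddCommGroup N] [AddCommGroup Z]
    [Module A M] [Module A N] [Module A Z] (p : M →ₗ[A] N) (hp : Function.Surjective p)
    (ψ : M →ₗ[A] Z) (h : ∀ x, p x = 0 → ψ x = 0) :
    ∃ ψ' : N →ₗ[A] Z, ∀ x, ψ' (p x) = ψ x := by
  have hker : LinearMap.ker p ≤ LinearMap.ker ψ := fun x hx => h x hx
  let lp := Submodule.liftQ (LinearMap.ker p) p (le_refl _)
  have hlpinj : Function.Injective lp := by
    rw [← LinearMap.ker_eq_bot]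
    exact Submodule.ker_liftQ_eq_bot _ _ _ (le_refl _)
  have hlpsurj : Function.Surjective lp := by
    intro n
    obtain ⟨m, hm⟩ := hp n
    exact ⟨Submodule.Quotient.mk m, by simpa [lp] using hm⟩
  let qe := LinearEquiv.ofBijective lp ⟨hlpinj, hlpsurj⟩
  refine ⟨Submodule.liftQ (LinearMap.ker p) ψ hker ∘ₗ qe.symm.toLinearMap, fun x => ?_⟩
  have h1 : qe.symm (p x) = Submodule.Quotient.mk x := by
    rw [LinearEquiv.symm_apply_eq]
    show lp (Submodule.Quotient.mk x) = p x
    simp [lp]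
  show Submodule.liftQ (LinearMap.ker p) ψ hker (qe.symm (p x)) = ψ x
  rw [h1, Submodule.liftQ_apply]
end MyAux2
section MyAux3
variable {A : Type u} [Ring A]

-- pi-map lemmas
lemma compLeft_surj {M N : Type u} [AddCommGroup M] [AddCommGroup N] [Module A M] [Module A N]
    (f : M →ₗ[A] N) (hf : Function.Surjective f) (d : ℕ) :
    Function.Surjective (f.compLeft (Fin d)) := by
  intro v
  choose g hg using fun i => hf (v i)
  exact ⟨g, funext hg⟩

lemma compLeft_inj {M N : Type u} [AddCommGroup M] [AddCommGroup N] [Module A M] [Module A N]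
    (f : M →ₗ[A] N) (hf : Function.Injective f) (d : ℕ) :
    Function.Injective (f.compLeft (Fin d)) := by
  intro v w hvw
  funext i
  exact hf (congrFun hvw i)

lemma compLeft_range {M N : Type u} [AddCommGroup M] [AddCommGroup N] [Module A M] [Module A N]
    (f : M →ₗ[A] N) (d : ℕ) (v : Fin d → N) (hv : ∀ i, v i ∈ LinearMap.range f) :
    v ∈ Set.range (f.compLeft (Fin d)) := by
  choose g hg using hv
  exact ⟨g, funext hg⟩

-- exactness helpers
lemma exact_inl_prodMap {X P M N : Type u} [AddCommGroup X] [AddCommGroup P] [AddCommGroup M]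
    [AddCommGroup N] [Module A X] [Module A P] [Module A M] [Module A N]
    (f : X →ₗ[A] P) (g : P →ₗ[A] M) (hex : Function.Exact f g) :
    Function.Exact ((LinearMap.inl A P N) ∘ₗ f)
      (g.prodMap (LinearMap.id : N →ₗ[A] N)) := by
  rintro ⟨p, n⟩
  constructor
  · intro h0
    have h1 : g p = 0 := congrArg Prod.fst h0
    have h2 : n = 0 := congrArg Prod.snd h0
    obtain ⟨x, hx⟩ := (hex p).mp h1
    exact ⟨x, by simp [hx, h2]⟩
  · rintro ⟨x, hx⟩
    have h1 : p = f x := (congrArg Prod.fst hx).symm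
    have h2 : n = 0 := (congrArg Prod.snd hx).symm
    have : g (f x) = 0 := (hex (f x)).mpr ⟨x, rfl⟩
    simp [h1, h2, this]

lemma exact_comp_equiv {X P M M' : Type u} [AddCommGroup X] [AddCommGroup P] [AddCommGroup M]
    [AddCommGroup M'] [Module A X] [Module A P] [Module A M] [Module A M']
    (f : X →ₗ[A] P) (g : P →ₗ[A] M) (hex : Function.Exact f g) (e : M ≃ₗ[A] M') :
    Function.Exact f (e.toLinearMap ∘ₗ g) := by
  intro p
  constructor
  · intro h0
    have hg : g p = 0 := by
      apply e.injective
      simpa using h0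
    exact (hex p).mp hg
  · intro hp
    have hg : g p = 0 := (hex p).mpr hp
    show e (g p) = 0
    simp [hg]

end MyAux3

section MyDual
variable (k A : Type u) [Field k] [Ring A] [Algebra k A]

def StmtDual : Type u := A →ₗ[k] k

variable {k A}

def StmtDual.mk (f : A →ₗ[k] k) : StmtDual k A := f

def StmtDual.lin (f : StmtDual k A) : A →ₗ[k] k := f

lemma StmtDual.lin_injective : Function.Injective (StmtDual.lin (k := k) (A := A)) :=
  fun _ _ h => h

variable (k A)

instance : AddCommGroup (StmtDual k A) := inferInstanceAs (AddCommGroup (A →ₗ[k] k))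

lemma StmtDual.add_lin (f g : StmtDual k A) : (f + g).lin = f.lin + g.lin := rfl
lemma StmtDual.zero_lin : (0 : StmtDual k A).lin = 0 := rfl

variable {k A}

def StmtDual.asmul (a : A) (f : StmtDual k A) : StmtDual k A :=
  StmtDual.mk (f.lin ∘ₗ LinearMap.mulRight k a)

lemma StmtDual.asmul_lin (a : A) (f : StmtDual k A) (b : A) :
    (StmtDual.asmul a f).lin b = f.lin (b * a) := rfl

variable (k A)

instance : Module A (StmtDual k A) where
  smul a f := StmtDual.asmul a f
  one_smul f := StmtDual.lin_injective (LinearMap.ext fun b => by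
    show (StmtDual.asmul 1 f).lin b = f.lin b
    rw [StmtDual.asmul_lin, mul_one])
  mul_smul a a' f := StmtDual.lin_injective (LinearMap.ext fun b => by
    show (StmtDual.asmul (a * a') f).lin b = (StmtDual.asmul a (StmtDual.asmul a' f)).lin b
    rw [StmtDual.asmul_lin, StmtDual.asmul_lin, StmtDual.asmul_lin, mul_assoc])
  smul_zero a := StmtDual.lin_injective (LinearMap.ext fun b => by
    show (StmtDual.asmul a 0).lin b = (0 : StmtDual k A).lin b
    rw [StmtDual.asmul_lin]; rfl)
  smul_add a f g := StmtDual.lin_injective (LinearMap.ext fun b => by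
    show (StmtDual.asmul a (f + g)).lin b = ((StmtDual.asmul a f) + (StmtDual.asmul a g)).lin b
    rw [StmtDual.asmul_lin, StmtDual.add_lin, StmtDual.add_lin]
    simp [StmtDual.asmul_lin])
  add_smul a a' f := StmtDual.lin_injective (LinearMap.ext fun b => by
    show (StmtDual.asmul (a + a') f).lin b = ((StmtDual.asmul a f) + (StmtDual.asmul a' f)).lin b
    rw [StmtDual.asmul_lin, StmtDual.add_lin]
    show f.lin (b * (a + a')) = (StmtDual.asmul a f).lin b + (StmtDual.asmul a' f).lin b
    rw [StmtDual.asmul_lin, StmtDual.asmul_lin, mul_add, map_add])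
  zero_smul f := StmtDual.lin_injective (LinearMap.ext fun b => by
    show (StmtDual.asmul 0 f).lin b = (0 : StmtDual k A).lin b
    rw [StmtDual.asmul_lin, mul_zero, map_zero]; rfl)

variable {k A}

lemma StmtDual.smul_lin (a : A) (f : StmtDual k A) (b : A) : (a • f).lin b = f.lin (b * a) := rfl

end MyDual

section MyDual2
variable {k A : Type u} [Field k] [Ring A] [Algebra k A]

lemma exists_extend_functional {V W : Type u} [AddCommGroup V] [AddCommGroup W]
    [Module k V] [Module k W] (f : V →ₗ[k] W) (hf : Function.Injective f) (g : V →ₗ[k] k) :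
    ∃ h : W →ₗ[k] k, ∀ v, h (f v) = g v := by
  obtain ⟨q, hq⟩ := Submodule.exists_isCompl (LinearMap.range f)
  let proj := Submodule.linearProjOfIsCompl _ q hq
  let e := LinearEquiv.ofInjective f hf
  refine ⟨g ∘ₗ e.symm.toLinearMap ∘ₗ proj, fun v => ?_⟩
  have h1 : proj (f v) = e v := by
    have : f v = ((e v : LinearMap.range f) : W) := by
      simp [e, LinearEquiv.ofInjective_apply]
    rw [this]
    exact Submodule.linearProjOfIsCompl_apply_left hq (e v)
  show g (e.symm (proj (f v))) = g v
  rw [h1, LinearEquiv.symm_apply_apply]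

instance : Module k (StmtDual k A) := inferInstanceAs (Module k (A →ₗ[k] k))

lemma StmtDual.ksmul_lin (c : k) (f : StmtDual k A) (b : A) :
    (c • f).lin b = c • (f.lin b) := rfl

instance : IsScalarTower k A (StmtDual k A) := by
  constructor
  intro c a f
  apply StmtDual.lin_injective
  apply LinearMap.ext
  intro b
  rw [StmtDual.smul_lin, StmtDual.ksmul_lin, StmtDual.smul_lin]
  rw [Algebra.smul_def, ← mul_assoc, ← Algebra.commutes c b, mul_assoc, ← Algebra.smul_def]
  exact map_smul (StmtDual.lin f) c (b * a)

lemma stmtdual_finite [FiniteDimensional k A] : Module.Finite A (StmtDual k A) := by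
  haveI : Module.Finite k (StmtDual k A) := inferInstanceAs (Module.Finite k (A →ₗ[k] k))
  exact Module.Finite.of_restrictScalars_finite k A (StmtDual k A)

lemma stmtdual_injective : Module.Injective A (StmtDual k A) where
  out X Y _ _ _ _ f hf g := by
    letI : Module k X := Module.compHom X (algebraMap k A)
    letI : Module k Y := Module.compHom Y (algebraMap k A)
    have hsX : ∀ (c : k) (x : X), c • x = (algebraMap k A c) • x := fun _ _ => rfl
    have hsY : ∀ (c : k) (y : Y), c • y = (algebraMap k A c) • y := fun _ _ => rfl
    let gg : X →ₗ[k] k :=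
      { toFun := fun x => (g x).lin 1
        map_add' := fun x y => by
          show (g (x + y)).lin 1 = (g x).lin 1 + (g y).lin 1
          rw [map_add, StmtDual.add_lin]; rfl
        map_smul' := fun c x => by
          show (g (c • x)).lin 1 = c • (g x).lin 1
          rw [hsX, map_smul, StmtDual.smul_lin, one_mul, Algebra.algebraMap_eq_smul_one,
            map_smul] }
    let fk : X →ₗ[k] Y :=
      { toFun := f
        map_add' := map_add f
        map_smul' := fun c x => by show f (c • x) = c • f x; rw [hsX, map_smul, hsY] }
    obtain ⟨hh, hhh⟩ := exists_extend_functional fk hf gg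
    let mkfun : Y → StmtDual k A := fun y => StmtDual.mk <|
      { toFun := fun a => hh (a • y)
        map_add' := fun a a' => by
          show hh ((a + a') • y) = hh (a • y) + hh (a' • y)
          rw [add_smul, map_add]
        map_smul' := fun c a => by
          show hh ((c • a) • y) = c • hh (a • y)
          rw [Algebra.smul_def, mul_smul, ← hsY, map_smul] }
    have mkfun_lin : ∀ (y : Y) (a : A), (mkfun y).lin a = hh (a • y) := fun _ _ => rfl
    refine ⟨{ toFun := mkfun,
              map_add' := fun y y' => StmtDual.lin_injective (LinearMap.ext fun a => by
          rw [StmtDual.add_lin]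
          show hh (a • (y + y')) = (mkfun y).lin a + (mkfun y').lin a
          rw [mkfun_lin, mkfun_lin, smul_add, map_add]),
              map_smul' := fun a' y => StmtDual.lin_injective (LinearMap.ext fun a => by
          show (mkfun (a' • y)).lin a = (a' • (mkfun y)).lin a
          rw [StmtDual.smul_lin, mkfun_lin, mkfun_lin, ← mul_smul]) }, fun x => ?_⟩
    apply StmtDual.lin_injective
    apply LinearMap.ext
    intro a
    show hh (a • f x) = (g x).lin a
    have : a • f x = f (a • x) := (map_smul f a x).symm
    rw [this]
    have h2 : hh (f (a • x)) = gg (a • x) := hhh (a • x)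
    rw [h2]
    show (g (a • x)).lin 1 = (g x).lin a
    rw [map_smul, StmtDual.smul_lin, one_mul]

end MyDual2

section MyEmbed
variable {k A : Type u} [Field k] [Ring A] [Algebra k A] [FiniteDimensional k A]

lemma exists_embed_dual (X : Type u) [AddCommGroup X] [Module A X] [Module.Finite A X] :
    ∃ (n : ℕ) (Φ : X →ₗ[A] (Fin n → StmtDual k A)), Function.Injective Φ := by
  letI : Module k X := Module.compHom X (algebraMap k A)
  have hsX : ∀ (c : k) (x : X), c • x = (algebraMap k A c) • x := fun _ _ => rfl
  haveI : IsScalarTower k A X := by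
    constructor
    intro c a x
    rw [Algebra.smul_def, mul_smul, ← hsX]
  haveI : Module.Finite k X := Module.Finite.trans A X
  let n := Module.finrank k X
  let bb := Module.finBasis k X
  let lam : X ≃ₗ[k] (Fin n → k) := bb.equivFun
  let Φ0 : X → (Fin n → StmtDual k A) := fun x => fun i => StmtDual.mk <|
    { toFun := fun a => lam (a • x) i
      map_add' := fun a a' => by
        show lam ((a + a') • x) i = lam (a • x) i + lam (a' • x) i
        rw [add_smul, map_add]; rfl
      map_smul' := fun c a => by
        show lam ((c • a) • x) i = c • lam (a • x) i
        rw [Algebra.smul_def, mul_smul, ← hsX, map_smul]; rfl }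
  have Φ0lin : ∀ (x : X) (i : Fin n) (a : A), (Φ0 x i).lin a = lam (a • x) i := fun _ _ _ => rfl
  let Φ : X →ₗ[A] (Fin n → StmtDual k A) :=
    { toFun := Φ0,
      map_add' := fun x x' => by
        funext i
        apply StmtDual.lin_injective
        apply LinearMap.ext
        intro a
        have hpi : ((Φ0 x + Φ0 x') i) = Φ0 x i + Φ0 x' i := rfl
        rw [hpi, StmtDual.add_lin]
        show lam (a • (x + x')) i = (Φ0 x i).lin a + (Φ0 x' i).lin a
        rw [Φ0lin, Φ0lin, smul_add, map_add]
        rfl,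
      map_smul' := fun a' x => by
        funext i
        apply StmtDual.lin_injective
        apply LinearMap.ext
        intro a
        show (Φ0 (a' • x) i).lin a = ((a' • Φ0 x) i).lin a
        have : ((a' • Φ0 x) i) = a' • (Φ0 x i) := rfl
        rw [this, StmtDual.smul_lin, Φ0lin, Φ0lin]
        show lam (a • (a' • x)) i = lam ((a * a') • x) i
        rw [mul_smul] }
  refine ⟨n, Φ, fun x y hxy => ?_⟩
  have h1 : ∀ i, lam ((1 : A) • x) i = lam ((1 : A) • y) i := by
    intro i
    have h2 : Φ0 x i = Φ0 y i := congrFun hxy i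
    exact congrArg (fun f => StmtDual.lin f 1) h2
  have : lam x = lam y := by
    funext i
    simpa using h1 i
  exact lam.injective this

end MyEmbed

section ExactNC
variable {A : Type u} [Ring A]

lemma my_exact_subtype_mkQ {N : Type u} [AddCommGroup N] [Module A N] (Q : Submodule A N) :
    Function.Exact Q.subtype Q.mkQ := by
  intro y
  rw [Submodule.mkQ_apply, Submodule.Quotient.mk_eq_zero]
  constructor
  · intro hy
    exact ⟨⟨y, hy⟩, rfl⟩
  · rintro ⟨x, rfl⟩
    exact x.2

lemma my_exact_map_mkQ_range {M N : Type u} [AddCommGroup M] [AddCommGroup N] [Module A M]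
    [Module A N] (f : M →ₗ[A] N) : Function.Exact f (LinearMap.range f).mkQ := by
  intro y
  rw [Submodule.mkQ_apply, Submodule.Quotient.mk_eq_zero]
  constructor
  · rintro ⟨x, rfl⟩
    exact ⟨x, rfl⟩
  · rintro ⟨x, rfl⟩
    exact ⟨x, rfl⟩

lemma my_exact_subtype_ker {N P : Type u} [AddCommGroup N] [AddCommGroup P] [Module A N]
    [Module A P] (g : N →ₗ[A] P) : Function.Exact (LinearMap.ker g).subtype g := by
  intro y
  constructor
  · intro hy
    exact ⟨⟨y, hy⟩, rfl⟩
  · rintro ⟨x, rfl⟩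
    exact x.2

end ExactNC

section MainChase
variable {A : Type u} [Ring A]

lemma corestrict_eq {Z M N : Type u} [AddCommGroup Z] [AddCommGroup M] [AddCommGroup N]
    [Module A Z] [Module A M] [Module A N] (f : M →ₗ[A] N) (hf : Function.Injective f)
    (g : Z →ₗ[A] N) (hg : ∀ z, g z ∈ LinearMap.range f) :
    ∃ g' : Z →ₗ[A] M, ∀ z, f (g' z) = g z := by
  refine ⟨(LinearEquiv.ofInjective f hf).symm.toLinearMap ∘ₗ
    LinearMap.codRestrict (LinearMap.range f) g hg, fun z => ?_⟩
  have : ((LinearEquiv.ofInjective f hf) ((LinearEquiv.ofInjective f hf).symm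
      ⟨g z, hg z⟩) : N) = ((⟨g z, hg z⟩ : LinearMap.range f) : N) := by
    rw [LinearEquiv.apply_symm_apply]
  simpa [LinearEquiv.ofInjective_apply] using this

lemma main_baer {X T Ifin : Type u} [AddCommGroup X] [AddCommGroup T] [AddCommGroup Ifin]
    [Module A X] [Module A T] [Module A Ifin]
    (d : ℕ) (p2 : (Fin d → T) →ₗ[A] X) (hp2 : Function.Surjective p2)
    (Φ : X →ₗ[A] Ifin) (hΦ : Function.Injective Φ)
    (hIfin : Module.Injective A Ifin)
    (hidT : Module.Injective A T ∨ ∃ (IT CT : Type u) (_ : AddCommGroup IT)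
      (_ : AddCommGroup CT) (_ : Module A IT) (_ : Module A CT)
      (j3 : T →ₗ[A] IT) (π3 : IT →ₗ[A] CT),
      Module.Injective A IT ∧ Module.Injective A CT ∧ Function.Injective j3 ∧
        Function.Surjective π3 ∧ Function.Exact j3 π3)
    (hsyz : ∀ J : Ideal A, ∃ (m : ℕ) (p : (Fin m → A) →ₗ[A] ↥J), Function.Surjective p ∧
        Module.Projective A ↥(LinearMap.ker p)) :
    Module.Baer A (Ifin ⧸ LinearMap.range Φ) := by
  intro J φ
  obtain ⟨m, p, hp, hKproj⟩ := hsyz J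
  set π := (LinearMap.range Φ).mkQ with hπdef
  -- (a)
  obtain ⟨a, ha⟩ := Module.projective_lifting_property π (φ ∘ₗ p) (Submodule.mkQ_surjective _)
  have ha' : ∀ y, π (a y) = φ (p y) := fun y => DFunLike.congr_fun ha y
  -- (b)
  have hmemX : ∀ x : ↥(LinearMap.ker p), a ↑x ∈ LinearMap.range Φ := by
    intro x
    have h0 : π (a ↑x) = 0 := by
      rw [ha']
      have : p ↑x = 0 := x.2
      rw [this, map_zero]
    rwa [hπdef, Submodule.mkQ_apply, Submodule.Quotient.mk_eq_zero] at h0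
  obtain ⟨β, hβ⟩ := corestrict_eq Φ hΦ (a ∘ₗ (LinearMap.ker p).subtype) hmemX
  -- (c)
  obtain ⟨b, hb⟩ := Module.projective_lifting_property (h := hKproj) p2 β hp2
  have hb' : ∀ x, p2 (b x) = β x := fun x => DFunLike.congr_fun hb x
  -- (d)
  have hd : ∃ b' : (Fin m → A) →ₗ[A] (Fin d → T),
      ∀ x : ↥(LinearMap.ker p), b' ↑x = b x := by
    rcases hidT with hTinj | ⟨IT, CT, _, _, _, _, j3, π3, hIT, hCT, hj3, hπ3, hex3⟩
    · obtain ⟨b', hbb⟩ := (myInj_pi hTinj d).out (LinearMap.ker p).subtype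
        (Submodule.injective_subtype _) b
      exact ⟨b', fun x => hbb x⟩
    · set j3d := j3.compLeft (Fin d) with hj3ddef
      set π3d := π3.compLeft (Fin d) with hπ3ddef
      have hj3d : Function.Injective j3d := compLeft_inj j3 hj3 d
      obtain ⟨c, hc⟩ := (myInj_pi hIT d).out (LinearMap.ker p).subtype
        (Submodule.injective_subtype _) (j3d ∘ₗ b)
      have hfac : ∀ y, p y = 0 → (π3d ∘ₗ c) y = 0 := by
        intro y hy
        have hy' : y ∈ LinearMap.ker p := hy
        have : c y = j3d (b ⟨y, hy'⟩) := hc ⟨y, hy'⟩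
        show π3d (c y) = 0
        rw [this]
        funext i
        exact (hex3 _).mpr ⟨_, rfl⟩
      obtain ⟨dbar, hdbar⟩ := exists_factor p hp (π3d ∘ₗ c) hfac
      obtain ⟨D, hD⟩ := (myInj_pi hCT d).out J.subtype (Submodule.injective_subtype _) dbar
      obtain ⟨E, hE⟩ := Module.projective_lifting_property π3d D (compLeft_surj π3 hπ3 d)
      have hE' : ∀ z, π3d (E z) = D z := fun z => DFunLike.congr_fun hE z
      set e := E ∘ₗ (Submodule.subtype J) ∘ₗ p with hedef
      have hrange : ∀ y, (c - e) y ∈ LinearMap.range j3d := by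
        intro y
        have h1 : π3d ((c - e) y) = 0 := by
          have h2 : π3d (e y) = dbar (p y) := by
            show π3d (E ((J.subtype) (p y))) = dbar (p y)
            rw [hE', hD]
          have h3 : π3d (c y) = dbar (p y) := (hdbar y).symm
          rw [LinearMap.sub_apply, map_sub, h2, h3, sub_self]
        have h4 : ∀ i, ((c - e) y) i ∈ LinearMap.range j3 := by
          intro i
          have : π3 (((c - e) y) i) = 0 := congrFun h1 i
          obtain ⟨t0, ht0⟩ := (hex3 _).mp this
          exact ⟨t0, ht0⟩
        obtain ⟨v, hv⟩ := compLeft_range j3 d ((c - e) y) h4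
        exact ⟨v, hv⟩
      obtain ⟨b', hb'j⟩ := corestrict_eq j3d hj3d (c - e) hrange
      refine ⟨b', fun x => ?_⟩
      apply hj3d
      rw [hb'j]
      have h5 : e ↑x = 0 := by
        show E ((J.subtype) (p ↑x)) = 0
        have : p ↑x = 0 := x.2
        rw [this, map_zero, map_zero]
      show c ↑x - e ↑x = j3d (b x)
      rw [h5, sub_zero]
      exact hc x
  obtain ⟨b', hb'e⟩ := hd
  -- (e)
  set gX := p2 ∘ₗ b' with hgXdef
  set ψ0 := a - Φ ∘ₗ gX with hψ0def
  have hv : ∀ y, p y = 0 → ψ0 y = 0 := by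
    intro y hy
    have hy' : y ∈ LinearMap.ker p := hy
    have h1 : a y = Φ (β ⟨y, hy'⟩) := by
      have := hβ ⟨y, hy'⟩
      exact this.symm
    have h2 : gX y = β ⟨y, hy'⟩ := by
      show p2 (b' y) = β ⟨y, hy'⟩
      have : b' y = b ⟨y, hy'⟩ := hb'e ⟨y, hy'⟩
      rw [this, hb']
    show a y - Φ (gX y) = 0
    rw [h1, h2, sub_self]
  obtain ⟨ψbar, hψbar⟩ := exists_factor p hp ψ0 hv
  have hπψ : ∀ j : ↥J, π (ψbar j) = φ j := by
    intro j
    obtain ⟨y, rfl⟩ := hp j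
    rw [hψbar]
    show π (a y - Φ (gX y)) = φ (p y)
    rw [map_sub, ha']
    have : π (Φ (gX y)) = 0 := by
      rw [hπdef, Submodule.mkQ_apply, Submodule.Quotient.mk_eq_zero]
      exact ⟨gX y, rfl⟩
    rw [this, sub_zero]
  -- (f)
  obtain ⟨Ψ, hΨ⟩ := hIfin.out J.subtype (Submodule.injective_subtype _) ψbar
  refine ⟨π ∘ₗ Ψ, fun x mem => ?_⟩
  show π (Ψ x) = φ ⟨x, mem⟩
  have : Ψ x = Ψ ((J.subtype) ⟨x, mem⟩) := rfl
  rw [this, hΨ, hπψ]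

end MainChase


/-- If pd(τ(⊕ Ω I_i)) ≤ 1 (I_i the injective non-projectives),
then every indecomposable X ∈ Gen(T_C) has id ≤ 1. -/
theorem stmt9 (k : Type u) [Field k] [IsAlgClosed k]
    (A : Type u) [Ring A] [Algebra k A] [FiniteDimensional k A]
    (τ : ARTranslation A) (hgl : GlobalDimEq2 A) (hdom : DomDimGE2 A)
    (T : ModuleCat.{u} A) (hT : IsTilting T) (hC : IsCotilting T) (hTC : InC T)
    (hpd : ∀ I K : ModuleCat.{u} A, Module.Finite A I → Injective I → ¬ Projective I →
      IsMinSyzygy K I → ProjDimLE 1 (τ.τ K)) :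
    ∀ X : ModuleCat.{u} A, Module.Finite A X → Indec X → IsGenBy T X → InjDimLE 1 X := by
  intro X hXfin hXindec hXgen
  classical
  haveI hNkA : IsNoetherian k A := inferInstance
  haveI hNoeth : IsNoetherian A A := isNoetherian_of_tower k hNkA
  -- second syzygies of cyclic modules are projective
  have hsyz : ∀ J : Ideal A, ∃ (m : ℕ) (p : (Fin m → A) →ₗ[A] ↥J), Function.Surjective p ∧
      Module.Projective A ↥(LinearMap.ker p) := by
    intro J
    haveI : Module.Finite A ↥J := Module.Finite.iff_fg.mpr (IsNoetherian.noetherian J)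
    obtain ⟨m, p, hp⟩ := Module.Finite.exists_fin' A ↥J
    refine ⟨m, p, hp, ?_⟩
    have hfinQ : Module.Finite A (A ⧸ J) := inferInstance
    have hpd2 : Projective (ModuleCat.of A (A ⧸ J)) ∨
        ∃ (K' P : ModuleCat.{u} A) (f' : K' ⟶ P) (g' : P ⟶ ModuleCat.of A (A ⧸ J)),
          Projective P ∧ Module.Finite A K' ∧ IsSES f' g' ∧ ProjDimLE 1 K' :=
      hgl.1 (ModuleCat.of A (A ⧸ J)) hfinQ
    rcases hpd2 with hproj | ⟨K', P, f', g', hPproj, hK'fin, ⟨hf'inj, hg'surj, hex'⟩, hpd1⟩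
    · have hQproj : Module.Projective A (A ⧸ J) := myProj_of_cat hproj
      have hJproj : Module.Projective A ↥J :=
        proj_of_ses J.subtype J.mkQ (Submodule.injective_subtype _) (Submodule.mkQ_surjective _)
          (my_exact_subtype_mkQ J) inferInstance hQproj
      exact proj_of_ses (LinearMap.ker p).subtype p (Submodule.injective_subtype _) hp
        (my_exact_subtype_ker p) inferInstance hJproj
    · have hPproj' : Module.Projective A ↥P := myProj_of_cat hPproj
      obtain ⟨σ⟩ := schanuel_equiv J.subtype J.mkQ (Submodule.injective_subtype _)
        (Submodule.mkQ_surjective _) (my_exact_subtype_mkQ J)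
        (f'.hom : ↥K' →ₗ[A] ↥P) (g'.hom : ↥P →ₗ[A] (A ⧸ J)) hf'inj hg'surj hex' inferInstance hPproj'
      -- big SES : ker p → F₀ × P → K' × A
      set f₁ : ↥(LinearMap.ker p) →ₗ[A] ((Fin m → A) × ↥P) :=
        (LinearMap.inl A (Fin m → A) ↥P) ∘ₗ (LinearMap.ker p).subtype with hf₁def
      set g₁ : ((Fin m → A) × ↥P) →ₗ[A] (↥K' × A) :=
        σ.toLinearMap ∘ₗ (p.prodMap (LinearMap.id : ↥P →ₗ[A] ↥P)) with hg₁def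
      have hf₁inj : Function.Injective f₁ := by
        intro x y hxy
        have : ((LinearMap.ker p).subtype x : Fin m → A) = (LinearMap.ker p).subtype y :=
          congrArg Prod.fst hxy
        exact Subtype.ext this
      have hg₁surj : Function.Surjective g₁ := by
        intro z
        obtain ⟨⟨j, q⟩, hjq⟩ := σ.surjective z
        obtain ⟨y, hy⟩ := hp j
        exact ⟨(y, q), by simp [hg₁def, LinearMap.prodMap_apply, hy, hjq]⟩
      have hex₁ : Function.Exact f₁ g₁ :=
        exact_comp_equiv _ _ (exact_inl_prodMap (LinearMap.ker p).subtype p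
          (my_exact_subtype_ker p)) σ
      haveI := hPproj'
      rcases hpd1 with hK'proj | ⟨K'', P'', f'', g'', hP''proj, hK''fin, ⟨hf''inj, hg''surj, hex''⟩, hK''pd0⟩
      · haveI : Module.Projective A ↥K' := myProj_of_cat hK'proj
        exact proj_of_ses f₁ g₁ hf₁inj hg₁surj hex₁ inferInstance inferInstance
      · have hK''cat : Projective K'' := hK''pd0
        haveI : Module.Projective A ↥P'' := myProj_of_cat hP''proj
        exact schanuel_transfer f₁ g₁ hf₁inj hg₁surj hex₁
          ((LinearMap.inl A ↥P'' A) ∘ₗ (f''.hom : ↥K'' →ₗ[A] ↥P''))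
          ((g''.hom : ↥P'' →ₗ[A] ↥K').prodMap (LinearMap.id : A →ₗ[A] A))
          (by
            intro x y hxy
            exact hf''inj (congrArg Prod.fst hxy))
          (by
            intro z
            obtain ⟨q, hq⟩ := hg''surj z.1
            exact ⟨(q, z.2), by simp [LinearMap.prodMap_apply, hq]⟩)
          (exact_inl_prodMap (f''.hom : ↥K'' →ₗ[A] ↥P'') (g''.hom : ↥P'' →ₗ[A] ↥K') hex'')
          inferInstance inferInstance (myProj_of_cat hK''cat)
  -- injective dimension of T at most 1, in module-theoretic form
  have hidT : Module.Injective A ↥T ∨ ∃ (IT CT : Type u) (_ : AddCommGroup IT)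
      (_ : AddCommGroup CT) (_ : Module A IT) (_ : Module A CT)
      (j3 : ↥T →ₗ[A] IT) (π3 : IT →ₗ[A] CT),
      Module.Injective A IT ∧ Module.Injective A CT ∧ Function.Injective j3 ∧
        Function.Surjective π3 ∧ Function.Exact j3 π3 := by
    have hid : Injective T ∨ ∃ (I C : ModuleCat.{u} A) (f : T ⟶ I) (g : I ⟶ C),
        Injective I ∧ Module.Finite A C ∧ IsSES f g ∧ InjDimLE 0 C := hC.id
    rcases hid with hTinj | ⟨IT, CT, f3, g3, hITinj, hCTfin, ⟨hf3inj, hg3surj, hex3⟩, hCT0⟩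
    · exact Or.inl (myInj_of_cat hTinj)
    · have hCTinj : Injective CT := hCT0
      exact Or.inr ⟨↥IT, ↥CT, inferInstance, inferInstance, inferInstance, inferInstance,
        (f3.hom : ↥T →ₗ[A] ↥IT), (g3.hom : ↥IT →ₗ[A] ↥CT), myInj_of_cat hITinj, myInj_of_cat hCTinj,
        hf3inj, hg3surj, hex3⟩
  -- embed X into a finite power of the dual of A
  haveI : Module.Finite A ↥X := hXfin
  obtain ⟨n, Φ, hΦ⟩ := exists_embed_dual (k := k) (A := A) ↥X
  have hDualInj : Module.Injective A (StmtDual k A) := stmtdual_injective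
  have hIfinj : Module.Injective A (Fin n → StmtDual k A) := myInj_pi hDualInj n
  haveI : Module.Finite A (StmtDual k A) := stmtdual_finite
  haveI : Module.Finite A (Fin n → StmtDual k A) := inferInstance
  obtain ⟨d, p2, hp2⟩ := hXgen
  have hBaer : Module.Baer A ((Fin n → StmtDual k A) ⧸ LinearMap.range Φ) :=
    main_baer d (p2.hom : (Fin d → ↥T) →ₗ[A] ↥X) hp2 Φ hΦ hIfinj hidT hsyz
  have hCqinj : Module.Injective A ((Fin n → StmtDual k A) ⧸ LinearMap.range Φ) :=
    hBaer.injective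
  haveI : Module.Finite A ((Fin n → StmtDual k A) ⧸ LinearMap.range Φ) :=
    Module.Finite.of_surjective (LinearMap.range Φ).mkQ (Submodule.mkQ_surjective _)
  refine Or.inr ⟨ModuleCat.of A (Fin n → StmtDual k A),
    ModuleCat.of A ((Fin n → StmtDual k A) ⧸ LinearMap.range Φ),
    ModuleCat.ofHom Φ, ModuleCat.ofHom (LinearMap.range Φ).mkQ, ?_, ?_, ⟨hΦ, Submodule.mkQ_surjective _,
      my_exact_map_mkQ_range Φ⟩, ?_⟩
  · exact Module.injective_object_of_injective_module A _ (inj := hIfinj)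
  · show Module.Finite A ((Fin n → StmtDual k A) ⧸ LinearMap.range Φ)
    infer_instance
  · exact Module.injective_object_of_injective_module A _ (inj := hCqinj)
end
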